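/- arXiv:2601.15218 — 6 statements merged into one kernel-verified Lean document; each statement's English description precedes it below -/
import Mathlib

section
/- Let (X,d) be a Polish space, N ≥ 2, ρ a Borel probability measure on X, and h : [0,∞) → (0,∞] a strictly decreasing continuous function with inverse h^{-1}. Assume that if lim_{t→0^+} h(t) = +∞ then sup_{x∈X} ρ({x}) < 1/N, and assume 𝒞_∞(ρ) is finite with 𝒞_∞(ρ)/(N(N−1)) in the range of h. Then the integral repulsive cost 𝒞(ρ) := inf over N-couplings λ of ρ of ∫_{X^N} Σ_{1≤i<j≤N} h(d(x_i,x_j)) dλ satisfies 𝒞(ρ) ≥ h( 2 h^{-1}( 𝒞_∞(ρ)/(N(N−1)) ) ) · ( N·κ_ρ( h^{-1}( 𝒞_∞(ρ)/(N(N−1)) ) ) − 1 ) / (N(N−1)), where 𝒞_∞(ρ) := inf over N-couplings λ of the λ-essential supremum of Σ_{1≤i<j≤N} h(d(x_i,x_j)) and κ_ρ(α) := sup_{x∈X} ρ(B̄(x,α)). -/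
open MeasureTheory Metric ENNReal Filter

theorem stmt4 {X : Type*} [MetricSpace X] [PolishSpace X] [MeasurableSpace X] [BorelSpace X]
    (N : ℕ) (hN : 2 ≤ N)
    (ρ : Measure X) [IsProbabilityMeasure ρ]
    (h : ℝ → ℝ≥0∞)
    (hpos : ∀ t : ℝ, 0 ≤ t → 0 < h t)
    (hanti : StrictAntiOn h (Set.Ici 0))
    (hcont : ContinuousOn h (Set.Ici 0))
    (hA : Tendsto h (nhdsWithin 0 (Set.Ioi 0)) (nhds ⊤) →
      (⨆ x : X, ρ {x}) < (N : ℝ≥0∞)⁻¹)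
    (Cinf : ℝ≥0∞)
    (hCinf : Cinf = ⨅ (lam : Measure (Fin N → X))
        (_ : IsProbabilityMeasure lam ∧ ∀ i : Fin N, lam.map (fun x => x i) = ρ),
        essSup (fun x : Fin N → X =>
          ∑ p ∈ Finset.univ.filter (fun p : Fin N × Fin N => p.1 < p.2),
            h (dist (x p.1) (x p.2))) lam)
    (hfin : Cinf ≠ ⊤)
    (α : ℝ) (hα : 0 ≤ α)
    (hinv : h α = Cinf / ((N : ℝ≥0∞) * ((N : ℝ≥0∞) - 1))) :
    (⨅ (lam : Measure (Fin N → X))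
        (_ : IsProbabilityMeasure lam ∧ ∀ i : Fin N, lam.map (fun x => x i) = ρ),
        ∫⁻ x, (∑ p ∈ Finset.univ.filter (fun p : Fin N × Fin N => p.1 < p.2),
          h (dist (x p.1) (x p.2))) ∂lam)
      ≥ h (2 * α) *
        (((N : ℝ≥0∞) * (⨆ x : X, ρ (closedBall x α)) - 1) /
          ((N : ℝ≥0∞) * ((N : ℝ≥0∞) - 1))) := by
  classical
  have hα2 : (0:ℝ) ≤ 2*α := by linarith
  have hmono : ∀ s t : ℝ, 0 ≤ s → s ≤ t → h t ≤ h s := fun s t hs hst =>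
    hanti.antitoneOn hs (hs.trans hst) hst
  set D : ℝ≥0∞ := (N:ℝ≥0∞) * ((N:ℝ≥0∞) - 1) with hD
  have hN' : (2:ℝ≥0∞) ≤ (N:ℝ≥0∞) := by exact_mod_cast hN
  have hNsub : (1:ℝ≥0∞) ≤ (N:ℝ≥0∞) - 1 := by
    rw [← Nat.cast_one (R := ℝ≥0∞), ← ENNReal.natCast_sub]
    exact_mod_cast Nat.le_sub_of_add_le (by omega)
  have hD0 : D ≠ 0 := by
    rw [hD]
    exact mul_ne_zero (by positivity) (by intro hc; simp [hc] at hNsub)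
  have hDT : D ≠ ⊤ := by
    rw [hD]
    exact ENNReal.mul_ne_top (natCast_ne_top N)
      (ne_top_of_le_ne_top (natCast_ne_top N) (tsub_le_self))
  have h2top : h (2*α) ≠ ⊤ := by
    have h1 : h (2*α) ≤ h α := hmono α (2*α) hα (by linarith)
    have h2 : h α ≠ ⊤ := by
      rw [hinv]
      exact (ENNReal.div_lt_top hfin hD0).ne
    exact ne_top_of_le_ne_top h2 h1
  have h20 : h (2*α) ≠ 0 := (hpos _ hα2).ne'
  refine le_iInf fun lam => le_iInf fun hc => ?_
  obtain ⟨hprob, hmarg⟩ := hc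
  set I := ∫⁻ x, (∑ p ∈ Finset.univ.filter (fun p : Fin N × Fin N => p.1 < p.2),
          h (dist (x p.1) (x p.2))) ∂lam with hI
  have key : ∀ x0 : X, (N:ℝ≥0∞) * ρ (closedBall x0 α) ≤ (I / h (2*α)) * D + 1 := by
    intro x0
    set B := closedBall x0 α with hBdef
    have hB : MeasurableSet B := measurableSet_closedBall
    set A : Fin N → Set (Fin N → X) := fun i => (fun y => y i) ⁻¹' B with hAdef
    have hAm : ∀ i, MeasurableSet (A i) := fun i => (measurable_pi_apply i) hB
    set S : Set (Fin N → X) := ⋃ i, ⋃ j, ⋃ (_ : i ≠ j), A i ∩ A j with hSdef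
    have hSm : MeasurableSet S := MeasurableSet.iUnion fun i => MeasurableSet.iUnion fun j =>
      MeasurableSet.iUnion fun _ => (hAm i).inter (hAm j)
    have hd : ∀ (y : Fin N → X) (a b : Fin N), y ∈ A a → y ∈ A b →
        h (2*α) ≤ h (dist (y a) (y b)) := by
      intro y a b ha hb
      refine hmono _ _ dist_nonneg ?_
      have ht := dist_triangle (y a) x0 (y b)
      have h1 : dist (y a) x0 ≤ α := ha
      have h2 : dist x0 (y b) ≤ α := by rw [dist_comm]; exact hb
      linarith
    have claimA : h (2*α) * lam S ≤ I := by
      rw [hI, ← lintegral_indicator_const hSm]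
      refine lintegral_mono fun y => ?_
      by_cases hy : y ∈ S
      · rw [Set.indicator_of_mem hy]
        simp only [hSdef, Set.mem_iUnion] at hy
        obtain ⟨i, j, hij, hyi, hyj⟩ := hy
        rcases hij.lt_or_gt with hlt | hlt
        · exact le_trans (hd y i j hyi hyj)
            (Finset.single_le_sum (f := fun p : Fin N × Fin N => h (dist (y p.1) (y p.2)))
              (fun _ _ => zero_le)
              (Finset.mem_filter.mpr ⟨Finset.mem_univ (i, j), hlt⟩))
        · exact le_trans (hd y j i hyj hyi)
            (Finset.single_le_sum (f := fun p : Fin N × Fin N => h (dist (y p.1) (y p.2)))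
              (fun _ _ => zero_le)
              (Finset.mem_filter.mpr ⟨Finset.mem_univ (j, i), hlt⟩))
      · rw [Set.indicator_of_notMem hy]; exact zero_le
    have hmargB : ∀ i : Fin N, lam (A i) = ρ B := by
      intro i
      rw [← hmarg i, Measure.map_apply (measurable_pi_apply i) hB]
    have hint : ∫⁻ y, (∑ i : Fin N, (A i).indicator (fun _ => (1:ℝ≥0∞)) y) ∂lam
        = (N:ℝ≥0∞) * ρ B := by
      rw [lintegral_finset_sum _ (fun i _ => measurable_const.indicator (hAm i))]
      simp only [lintegral_indicator_const (hAm _), one_mul, hmargB]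
      simp [mul_comm]
    have hpt : ∀ y, (∑ i : Fin N, (A i).indicator (fun _ => (1:ℝ≥0∞)) y)
        ≤ S.indicator (fun _ => D) y + 1 := by
      intro y
      by_cases hy : y ∈ S
      · rw [Set.indicator_of_mem hy]
        have h1 : (∑ i : Fin N, (A i).indicator (fun _ => (1:ℝ≥0∞)) y)
            ≤ ∑ _i : Fin N, (1:ℝ≥0∞) :=
          Finset.sum_le_sum fun i _ => by
            rw [Set.indicator_apply]; split_ifs <;> simp
        calc (∑ i : Fin N, (A i).indicator (fun _ => (1:ℝ≥0∞)) y)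
            ≤ (N:ℝ≥0∞) := by simpa using h1
          _ ≤ D := by
              rw [hD]
              calc (N:ℝ≥0∞) = (N:ℝ≥0∞) * 1 := (mul_one _).symm
                _ ≤ (N:ℝ≥0∞) * ((N:ℝ≥0∞) - 1) := mul_le_mul_right hNsub _
          _ ≤ D + 1 := le_self_add
      · rw [Set.indicator_of_notMem hy]
        have huniq : ∀ i, y ∈ A i → ∀ j, y ∈ A j → i = j := by
          intro i hi j hj
          by_contra hne
          exact hy (Set.mem_iUnion.mpr ⟨i, Set.mem_iUnion.mpr ⟨j,
            Set.mem_iUnion.mpr ⟨hne, hi, hj⟩⟩⟩)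
        rcases em (∃ i, y ∈ A i) with ⟨i0, hi0⟩ | hnone
        · have heq : ∀ i : Fin N, (A i).indicator (fun _ => (1:ℝ≥0∞)) y
              = if i = i0 then 1 else 0 := by
            intro i
            by_cases hi : y ∈ A i
            · rw [Set.indicator_of_mem hi, if_pos (huniq i hi i0 hi0)]
            · rw [Set.indicator_of_notMem hi, if_neg]
              rintro rfl; exact hi hi0
          rw [Finset.sum_congr rfl (fun i _ => heq i)]
          simp
        · have heq : ∀ i : Fin N, (A i).indicator (fun _ => (1:ℝ≥0∞)) y = 0 :=
            fun i => Set.indicator_of_notMem (fun hm => hnone ⟨i, hm⟩) _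
          rw [Finset.sum_congr rfl (fun i _ => heq i)]
          simp
    have hintS : ∫⁻ y, (S.indicator (fun _ => D) y + 1) ∂lam = D * lam S + 1 := by
      rw [lintegral_add_left (measurable_const.indicator hSm), lintegral_indicator_const hSm,
        lintegral_const, measure_univ, mul_one]
    have claimB : (N:ℝ≥0∞) * ρ B ≤ D * lam S + 1 := by
      rw [← hint, ← hintS]
      exact lintegral_mono hpt
    have hlamS : lam S ≤ I / h (2*α) := by
      rw [ENNReal.le_div_iff_mul_le (Or.inl h20) (Or.inl h2top), mul_comm]
      exact claimA
    calc (N:ℝ≥0∞) * ρ B ≤ D * lam S + 1 := claimB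
      _ ≤ (I / h (2*α)) * D + 1 := by
          refine add_le_add ?_ le_rfl
          rw [mul_comm]
          exact mul_le_mul_left hlamS D
  have hSup : (N:ℝ≥0∞) * (⨆ x : X, ρ (closedBall x α)) - 1 ≤ (I / h (2*α)) * D := by
    rw [tsub_le_iff_right, ENNReal.mul_iSup]
    exact iSup_le fun x => key x
  have hdiv : ((N:ℝ≥0∞) * (⨆ x : X, ρ (closedBall x α)) - 1) / D ≤ I / h (2*α) := by
    rw [ENNReal.div_le_iff hD0 hDT]
    exact le_trans hSup (le_refl _)
  calc h (2*α) * (((N:ℝ≥0∞) * (⨆ x : X, ρ (closedBall x α)) - 1) / D)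
      ≤ h (2*α) * (I / h (2*α)) := mul_le_mul_right hdiv _
    _ = I := ENNReal.mul_div_cancel h20 h2top
end

section
/- Let (X,d) be a Polish space, ρ a Borel probability measure on X, and h : [0,∞) → (0,∞] a strictly decreasing continuous function with inverse h^{-1}. Assume that if lim_{t→0^+} h(t) = +∞ then sup_{x∈X} ρ({x}) < 1/2, and assume 𝒞_∞(ρ) is finite with 𝒞_∞(ρ)/2 in the range of h. Then 𝒞(ρ) := inf over couplings λ of ρ with itself of ∫_{X×X} h(d(x,y)) dλ satisfies 𝒞(ρ) ≥ h( 2 h^{-1}( 𝒞_∞(ρ)/2 ) ) · ( 2κ_ρ( h^{-1}( 𝒞_∞(ρ)/2 ) ) − 1 ), where 𝒞_∞(ρ) := inf over couplings λ of the λ-essential supremum of h(d(x,y)) and κ_ρ(α) := sup_{x∈X} ρ(B̄(x,α)). -/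
open MeasureTheory Metric ENNReal Filter

theorem stmt9 {X : Type*} [MetricSpace X] [PolishSpace X] [MeasurableSpace X] [BorelSpace X]
    (ρ : Measure X) [IsProbabilityMeasure ρ]
    (h : ℝ → ℝ≥0∞)
    (hpos : ∀ t : ℝ, 0 ≤ t → 0 < h t)
    (hanti : StrictAntiOn h (Set.Ici 0))
    (hcont : ContinuousOn h (Set.Ici 0))
    (hA : Tendsto h (nhdsWithin 0 (Set.Ioi 0)) (nhds ⊤) →
      (⨆ x : X, ρ {x}) < 2⁻¹)
    (Cinf : ℝ≥0∞)
    (hCinf : Cinf = ⨅ (lam : Measure (X × X))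
        (_ : IsProbabilityMeasure lam ∧ lam.map Prod.fst = ρ ∧ lam.map Prod.snd = ρ),
        essSup (fun p : X × X => h (dist p.1 p.2)) lam)
    (hfin : Cinf ≠ ⊤)
    (α : ℝ) (hα : 0 ≤ α)
    (hinv : h α = Cinf / 2) :
    (⨅ (lam : Measure (X × X))
        (_ : IsProbabilityMeasure lam ∧ lam.map Prod.fst = ρ ∧ lam.map Prod.snd = ρ),
        ∫⁻ p, h (dist p.1 p.2) ∂lam)
      ≥ h (2 * α) * (2 * (⨆ x : X, ρ (closedBall x α)) - 1) := by
  refine le_iInf fun lam => le_iInf fun hlam => ?_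
  obtain ⟨hprob, hfst, hsnd⟩ := hlam
  haveI := hprob
  set S : Set (X × X) := {p | dist p.1 p.2 ≤ 2 * α} with hSdef
  have hS : MeasurableSet S :=
    measurableSet_le (measurable_fst.dist measurable_snd) measurable_const
  have h2α : (0:ℝ) ≤ 2 * α := by linarith
  have key : ∀ x : X, 2 * ρ (closedBall x α) ≤ lam S + 1 := by
    intro x
    set E1 : Set (X × X) := Prod.fst ⁻¹' closedBall x α with hE1def
    set E2 : Set (X × X) := Prod.snd ⁻¹' closedBall x α with hE2def
    have hE1 : lam E1 = ρ (closedBall x α) := by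
      rw [← hfst, Measure.map_apply measurable_fst measurableSet_closedBall]
    have hE2 : lam E2 = ρ (closedBall x α) := by
      rw [← hsnd, Measure.map_apply measurable_snd measurableSet_closedBall]
    have hsub : E1 ∩ E2 ⊆ S := by
      rintro ⟨a, b⟩ ⟨ha, hb⟩
      have ha' : dist a x ≤ α := ha
      have hb' : dist b x ≤ α := hb
      have : dist a b ≤ dist a x + dist x b := dist_triangle a x b
      have hxb : dist x b = dist b x := dist_comm x b
      simp only [hSdef, Set.mem_setOf_eq]
      linarith
    calc 2 * ρ (closedBall x α) = lam E1 + lam E2 := by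
          rw [hE1, hE2, two_mul]
      _ = lam (E1 ∪ E2) + lam (E1 ∩ E2) :=
          (measure_union_add_inter E1 (measurable_snd measurableSet_closedBall)).symm
      _ ≤ 1 + lam S := add_le_add prob_le_one (measure_mono hsub)
      _ = lam S + 1 := add_comm _ _
  have hκ : 2 * (⨆ x : X, ρ (closedBall x α)) - 1 ≤ lam S := by
    rw [tsub_le_iff_right, ENNReal.mul_iSup]
    exact iSup_le key
  calc h (2 * α) * (2 * (⨆ x : X, ρ (closedBall x α)) - 1)
      ≤ h (2 * α) * lam S := mul_le_mul_right hκ _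
    _ = ∫⁻ p, S.indicator (fun _ => h (2 * α)) p ∂lam :=
        (lintegral_indicator_const hS _).symm
    _ ≤ ∫⁻ p, h (dist p.1 p.2) ∂lam := by
        refine lintegral_mono fun p => ?_
        by_cases hp : p ∈ S
        · rw [Set.indicator_of_mem hp]
          exact hanti.antitoneOn dist_nonneg h2α hp
        · rw [Set.indicator_of_notMem hp]
          exact zero_le
end

section
/- (Coulomb case in ℝ^d) Let ρ be a Borel probability measure on ℝ^d with sup_{x} ρ({x}) < 1/2, and suppose 𝒞_∞(ρ) := inf over couplings λ of ρ with itself of the λ-essential supremum of 1/|x−y| is finite and positive. Then inf over couplings λ of ρ with itself of ∫_{ℝ^{2d}} 1/|x−y| dλ(x,y) ≥ (𝒞_∞(ρ)/4) · ( 2κ_ρ( 2/𝒞_∞(ρ) ) − 1 ), where κ_ρ(α) := sup_{x∈ℝ^d} ρ(B̄(x,α)). -/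
open MeasureTheory Metric ENNReal

theorem stmt10 (d : ℕ)
    (ρ : Measure (EuclideanSpace ℝ (Fin d))) [IsProbabilityMeasure ρ]
    (hatom : (⨆ x : EuclideanSpace ℝ (Fin d), ρ {x}) < 2⁻¹)
    (Cinf : ℝ≥0∞)
    (hCinf : Cinf = ⨅ (lam : Measure (EuclideanSpace ℝ (Fin d) × EuclideanSpace ℝ (Fin d)))
        (_ : IsProbabilityMeasure lam ∧ lam.map Prod.fst = ρ ∧ lam.map Prod.snd = ρ),
        essSup (fun p => (edist p.1 p.2)⁻¹) lam)
    (hfin : Cinf ≠ ⊤) (hposC : 0 < Cinf) :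
    (⨅ (lam : Measure (EuclideanSpace ℝ (Fin d) × EuclideanSpace ℝ (Fin d)))
        (_ : IsProbabilityMeasure lam ∧ lam.map Prod.fst = ρ ∧ lam.map Prod.snd = ρ),
        ∫⁻ p, (edist p.1 p.2)⁻¹ ∂lam)
      ≥ (Cinf / 4) *
        (2 * (⨆ x : EuclideanSpace ℝ (Fin d), ρ (closedBall x (2 / Cinf.toReal))) - 1) := by
  rw [ge_iff_le]
  refine le_iInf fun lam => le_iInf fun hlam => ?_
  obtain ⟨hprob, hfst, hsnd⟩ := hlam
  set α := 2 / Cinf.toReal with hα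
  have htR : 0 < Cinf.toReal := ENNReal.toReal_pos hposC.ne' hfin
  -- the crucial constant computation : (ofReal (2*α))⁻¹ = Cinf / 4
  have hconst : (ENNReal.ofReal (α + α))⁻¹ = Cinf / 4 := by
    have h2α : α + α = 4 / Cinf.toReal := by
      rw [hα]; ring
    rw [h2α, ENNReal.ofReal_div_of_pos htR, ENNReal.ofReal_toReal hfin,
      ENNReal.inv_div (Or.inr (by norm_num)) (Or.inr (by norm_num))]
    norm_num
  have key : ∀ x : EuclideanSpace ℝ (Fin d),
      Cinf / 4 * (2 * ρ (closedBall x α) - 1)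
        ≤ ∫⁻ p, (edist p.1 p.2)⁻¹ ∂lam := by
    intro x
    set B := closedBall x α with hB
    have hBm : MeasurableSet B := measurableSet_closedBall
    have hS : MeasurableSet (B ×ˢ B) := hBm.prod hBm
    have hρB1 : ρ B = lam (B ×ˢ (Set.univ : Set (EuclideanSpace ℝ (Fin d)))) := by
      rw [← hfst, Measure.map_apply measurable_fst hBm]
      congr 1; ext p; simp
    have hρB2 : ρ B = lam ((Set.univ : Set (EuclideanSpace ℝ (Fin d))) ×ˢ B) := by
      rw [← hsnd, Measure.map_apply measurable_snd hBm]
      congr 1; ext p; simp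
    have hlamS : 2 * ρ B - 1 ≤ lam (B ×ˢ B) := by
      rw [tsub_le_iff_right, two_mul]
      have hinter : (B ×ˢ (Set.univ : Set (EuclideanSpace ℝ (Fin d)))) ∩
          ((Set.univ : Set (EuclideanSpace ℝ (Fin d))) ×ˢ B) = B ×ˢ B := by
        ext p; simp [Set.mem_prod]
      have := measure_union_add_inter (μ := lam)
        (B ×ˢ (Set.univ : Set (EuclideanSpace ℝ (Fin d))))
        (MeasurableSet.prod MeasurableSet.univ hBm)
      rw [hinter] at this
      calc ρ B + ρ B
          = lam ((B ×ˢ Set.univ) ∪ (Set.univ ×ˢ B)) + lam (B ×ˢ B) := by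
            nth_rewrite 1 [hρB1]
            rw [hρB2, ← this]
        _ ≤ 1 + lam (B ×ˢ B) := by
            gcongr
            exact prob_le_one
        _ = lam (B ×ˢ B) + 1 := add_comm _ _
    have hpoint : ∀ p ∈ B ×ˢ B, Cinf / 4 ≤ (edist p.1 p.2)⁻¹ := by
      rintro ⟨p1, p2⟩ ⟨hp1, hp2⟩
      rw [← hconst]
      apply ENNReal.inv_le_inv.2
      calc edist p1 p2 ≤ edist p1 x + edist x p2 := edist_triangle _ _ _
        _ ≤ ENNReal.ofReal α + ENNReal.ofReal α := by
            gcongr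
            · rw [edist_dist]
              exact ENNReal.ofReal_le_ofReal (mem_closedBall.1 hp1)
            · rw [edist_dist, dist_comm]
              exact ENNReal.ofReal_le_ofReal (mem_closedBall.1 hp2)
        _ = ENNReal.ofReal (α + α) := by
            rw [ENNReal.ofReal_add (le_of_lt (by positivity)) (le_of_lt (by positivity))]
    calc Cinf / 4 * (2 * ρ B - 1) ≤ Cinf / 4 * lam (B ×ˢ B) := by gcongr
      _ = ∫⁻ p, (B ×ˢ B).indicator (fun _ => Cinf / 4) p ∂lam := by
          rw [lintegral_indicator_const hS]
      _ ≤ ∫⁻ p, (edist p.1 p.2)⁻¹ ∂lam := by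
          apply lintegral_mono
          intro p
          by_cases hp : p ∈ B ×ˢ B
          · rw [Set.indicator_of_mem hp]; exact hpoint p hp
          · rw [Set.indicator_of_notMem hp]; exact zero_le
  calc Cinf / 4 * (2 * (⨆ x, ρ (closedBall x α)) - 1)
      = Cinf / 4 * ((⨆ x, 2 * ρ (closedBall x α)) - 1) := by rw [ENNReal.mul_iSup]
    _ = Cinf / 4 * (⨆ x, 2 * ρ (closedBall x α) - 1) := by rw [ENNReal.iSup_sub]
    _ = ⨆ x, Cinf / 4 * (2 * ρ (closedBall x α) - 1) := by rw [ENNReal.mul_iSup]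
    _ ≤ ∫⁻ p, (edist p.1 p.2)⁻¹ ∂lam := iSup_le key
end

section
/- Let (X,d) be a Polish space, ρ a Borel probability measure on X with sup_{x} ρ({x}) < 1/2, and consider the Coulomb cost h(t) = 1/t. Set r_ρ := sup{ r > 0 : κ_ρ(r) ≤ 1/2 } (assumed to be the supremum of a nonempty set), where κ_ρ(r) := sup_{x∈X} ρ(B̄(x,r)). Let 0 < δ < 1/2. If inf_{x∈X} ρ( X \ B(x, 2r_ρ) ) ≤ δ, then 𝒞(ρ) ≥ ((1−2δ)/4) · 𝒞_∞(ρ), where 𝒞(ρ) := inf over couplings λ of ρ with itself of ∫ 1/d(x,y) dλ and 𝒞_∞(ρ) := inf over couplings λ of the λ-essential supremum of 1/d(x,y). -/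
open scoped ENNReal
open Set

namespace Stmt11Aux

noncomputable section

/-- split a tsum at one point -/
lemma tsplit (f : ℕ → ℝ≥0∞) (b : ℕ) :
    ∑' x, f x = f b + ∑' x, if x = b then 0 else f x :=
  ENNReal.summable.tsum_eq_add_tsum_ite' b

variable (p : ℕ → ℝ≥0∞) (R : ℕ → ℕ → Prop)

def rowSum (q : ℕ → ℕ → ℝ≥0∞) (i : ℕ) : ℝ≥0∞ := ∑' j, q i j

def K : Set (ℕ → ℕ → ℝ≥0∞) :=
  {q | (∀ i j, q i j = q j i) ∧ (∀ i j, ¬ R i j → q i j = 0) ∧ ∀ i, rowSum q i ≤ p i}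

def T (q : ℕ → ℕ → ℝ≥0∞) : ℝ≥0∞ := ∑' i, rowSum q i

lemma zero_mem_K : 0 ∈ K p R := by
  refine ⟨fun i j => rfl, fun i j _ => rfl, fun i => ?_⟩
  simp [rowSum]

lemma isClosed_K : IsClosed (K p R) := by
  have hev : ∀ i j : ℕ, Continuous fun q : ℕ → ℕ → ℝ≥0∞ => q i j := fun i j =>
    (continuous_apply j).comp (continuous_apply i)
  have h1 : IsClosed {q : ℕ → ℕ → ℝ≥0∞ | ∀ i j, q i j = q j i} := by
    rw [Set.setOf_forall]
    refine isClosed_iInter fun i => ?_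
    rw [Set.setOf_forall]
    exact isClosed_iInter fun j => isClosed_eq (hev i j) (hev j i)
  have h2 : IsClosed {q : ℕ → ℕ → ℝ≥0∞ | ∀ i j, ¬ R i j → q i j = 0} := by
    rw [Set.setOf_forall]
    refine isClosed_iInter fun i => ?_
    rw [Set.setOf_forall]
    refine isClosed_iInter fun j => ?_
    by_cases h : R i j
    · simp only [h, not_true_eq_false, false_implies, setOf_true]; exact isClosed_univ
    · simp only [h, not_false_eq_true, true_implies]
      exact isClosed_eq (hev i j) continuous_const
  have h3 : IsClosed {q : ℕ → ℕ → ℝ≥0∞ | ∀ i, rowSum q i ≤ p i} := by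
    rw [Set.setOf_forall]
    refine isClosed_iInter fun i => ?_
    have : {q : ℕ → ℕ → ℝ≥0∞ | rowSum q i ≤ p i}
        = ⋂ (F : Finset ℕ), {q | ∑ j ∈ F, q i j ≤ p i} := by
      ext q
      simp only [mem_iInter, mem_setOf_eq, rowSum, ENNReal.tsum_eq_iSup_sum, iSup_le_iff]
    rw [this]
    exact isClosed_iInter fun F =>
      isClosed_le (by exact continuous_finset_sum F fun j _ => hev i j) continuous_const
  have : K p R = ({q : ℕ → ℕ → ℝ≥0∞ | ∀ i j, q i j = q j i}
      ∩ {q : ℕ → ℕ → ℝ≥0∞ | ∀ i j, ¬ R i j → q i j = 0})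
      ∩ {q : ℕ → ℕ → ℝ≥0∞ | ∀ i, rowSum q i ≤ p i} := by
    ext q; simp [K, Set.mem_setOf_eq, and_assoc]
  rw [this]
  exact (h1.inter h2).inter h3


def S (n : ℕ) (q : ℕ → ℕ → ℝ≥0∞) : ℝ≥0∞ := ∑ i ∈ Finset.range n, ∑ j ∈ Finset.range n, q i j

def tail (n : ℕ) : ℝ≥0∞ := ∑' j, if j < n then 0 else p j

lemma tsum_split_lt (f : ℕ → ℝ≥0∞) (n : ℕ) :
    ∑' i, f i = (∑ i ∈ Finset.range n, f i) + ∑' i, if i < n then 0 else f i := by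
  have h1 : ∀ i, f i = (if i < n then f i else 0) + (if i < n then 0 else f i) := by
    intro i; split_ifs <;> simp
  calc ∑' i, f i = ∑' i, ((if i < n then f i else 0) + (if i < n then 0 else f i)) := by
        exact tsum_congr h1
    _ = (∑' i, if i < n then f i else 0) + ∑' i, if i < n then 0 else f i := ENNReal.tsum_add
    _ = (∑ i ∈ Finset.range n, f i) + ∑' i, if i < n then 0 else f i := by
        congr 1
        refine tsum_eq_sum ?_ |>.trans (Finset.sum_congr rfl fun i hi => ?_)
        · intro b hb
          simp only [Finset.mem_range] at hb
          simp [hb]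
        · simp only [Finset.mem_range] at hi
          simp [hi]

variable {p R}

lemma rowSum_le_tsum (q : ℕ → ℕ → ℝ≥0∞) (i : ℕ) : ∀ j, q i j ≤ rowSum q i := by
  intro j
  exact ENNReal.le_tsum j

lemma colSum_eq (q : ℕ → ℕ → ℝ≥0∞) (hq : ∀ i j, q i j = q j i) (j : ℕ) :
    ∑' i, q i j = rowSum q j := by
  unfold rowSum
  exact tsum_congr fun i => hq i j

lemma T_le_S_add_tail (hq : q ∈ K p R) (n : ℕ) : T q ≤ S n q + 2 * tail p n := by
  obtain ⟨hsym, hsupp, hrow⟩ := hq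
  have htail : (∑' i, if i < n then 0 else rowSum q i) ≤ tail p n :=
    ENNReal.tsum_le_tsum fun i => by split_ifs; exacts [le_rfl, hrow i]
  have e3 : (∑ i ∈ Finset.range n, rowSum q i)
      = S n q + ∑ i ∈ Finset.range n, ∑' j, (if j < n then 0 else q i j) := by
    rw [S, ← Finset.sum_add_distrib]
    exact Finset.sum_congr rfl fun i _ => tsum_split_lt _ n
  have e4 : (∑ i ∈ Finset.range n, ∑' j, (if j < n then 0 else q i j)) ≤ tail p n :=
    calc (∑ i ∈ Finset.range n, ∑' j, (if j < n then 0 else q i j))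
        ≤ ∑' i, ∑' j, (if j < n then 0 else q i j) := ENNReal.sum_le_tsum _
      _ = ∑' j, ∑' i, (if j < n then 0 else q i j) := ENNReal.tsum_comm
      _ = ∑' j, (if j < n then 0 else rowSum q j) := tsum_congr fun j => by
            split_ifs with h
            · simp
            · exact colSum_eq q hsym j
      _ ≤ tail p n := ENNReal.tsum_le_tsum fun j => by split_ifs; exacts [le_rfl, hrow j]
  calc T q = (∑ i ∈ Finset.range n, rowSum q i) + ∑' i, if i < n then 0 else rowSum q i :=
        tsum_split_lt _ n
    _ ≤ (S n q + tail p n) + tail p n := by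
        refine add_le_add ?_ htail
        rw [e3]
        exact add_le_add_right e4 _
    _ = S n q + 2 * tail p n := by rw [two_mul, add_assoc]

lemma S_le_T (q : ℕ → ℕ → ℝ≥0∞) (n : ℕ) : S n q ≤ T q := by
  unfold S T
  calc ∑ i ∈ Finset.range n, ∑ j ∈ Finset.range n, q i j
      ≤ ∑ i ∈ Finset.range n, rowSum q i :=
        Finset.sum_le_sum fun i _ => ENNReal.sum_le_tsum _
    _ ≤ ∑' i, rowSum q i := ENNReal.sum_le_tsum _

lemma T_le_one (hp : ∑' i, p i = 1) (hq : q ∈ K p R) : T q ≤ 1 := by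
  rw [← hp]
  exact ENNReal.tsum_le_tsum fun i => hq.2.2 i

lemma tail_small (hp : ∑' i, p i = 1) {ε : ℝ≥0∞} (hε : ε ≠ 0) : ∃ n, tail p n ≤ ε := by
  rcases le_or_gt 1 ε with h | h
  · exact ⟨0, by
      refine le_trans ?_ h
      rw [← hp]
      exact ENNReal.tsum_le_tsum fun j => by split_ifs <;> simp⟩
  · have hsup : (⨆ n, ∑ j ∈ Finset.range n, p j) = 1 := by
      rw [← ENNReal.tsum_eq_iSup_nat, hp]
    have h1 : 1 - ε < ⨆ n, ∑ j ∈ Finset.range n, p j := by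
      rw [hsup]
      exact ENNReal.sub_lt_self ENNReal.one_ne_top one_ne_zero hε
    rw [lt_iSup_iff] at h1
    obtain ⟨n, hn⟩ := h1
    refine ⟨n, ?_⟩
    by_contra hc
    push_neg at hc
    have hid : (∑ j ∈ Finset.range n, p j) + tail p n = 1 := by
      rw [← hp, tsum_split_lt p n]; rfl
    have : (1 : ℝ≥0∞) < 1 := by
      calc (1 : ℝ≥0∞) = (1 - ε) + ε := (tsub_add_cancel_of_le h.le).symm
        _ < (∑ j ∈ Finset.range n, p j) + tail p n := ENNReal.add_lt_add hn hc
        _ = 1 := hid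
    exact absurd this (lt_irrefl _)

lemma le_T_of_forall (hp : ∑' i, p i = 1) (hq : q ∈ K p R) {c : ℝ≥0∞}
    (h : ∀ m, c ≤ S m q + 2 * tail p m) : c ≤ T q := by
  refine ENNReal.le_of_forall_pos_le_add fun ε hε hfin => ?_
  obtain ⟨m, hm⟩ := tail_small hp (ε := ε / 2) (by
    simp only [ne_eq, ENNReal.div_eq_zero_iff]
    push_neg
    exact ⟨by exact_mod_cast hε.ne', ENNReal.ofNat_ne_top⟩)
  calc c ≤ S m q + 2 * tail p m := h m
    _ ≤ T q + 2 * (ε / 2) := add_le_add (S_le_T q m) (mul_le_mul_right hm 2)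
    _ = T q + ε := by rw [ENNReal.mul_div_cancel two_ne_zero ENNReal.ofNat_ne_top]

lemma exists_max (hp : ∑' i, p i = 1) :
    ∃ q ∈ K p R, ∀ q' ∈ K p R, T q' ≤ T q := by
  classical
  set t : ℝ≥0∞ := ⨆ (q' : ℕ → ℕ → ℝ≥0∞) (_ : q' ∈ K p R), T q' with ht
  have hTt : ∀ q' ∈ K p R, T q' ≤ t := fun q' hq' => le_iSup₂ (f := fun q' _ => T q') q' hq'
  by_cases h0 : t = 0
  · refine ⟨0, zero_mem_K p R, fun q' hq' => ?_⟩
    have := (hTt q' hq').trans h0.le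
    simpa [T, rowSum] using this
  · have htlt : t ≠ ∞ := by
      have : t ≤ 1 := iSup₂_le fun q' hq' => T_le_one hp hq'
      exact (this.trans_lt ENNReal.one_lt_top).ne
    set C : ℕ → Set (ℕ → ℕ → ℝ≥0∞) := fun n =>
      K p R ∩ {q | ∀ m, t - (↑(n+1))⁻¹ ≤ S m q + 2 * tail p m} with hC
    have hclosed : ∀ n, IsClosed (C n) := by
      intro n
      refine (isClosed_K p R).inter ?_
      rw [Set.setOf_forall]
      refine isClosed_iInter fun m => ?_
      refine isClosed_le continuous_const ?_
      exact Continuous.add (continuous_finset_sum _ fun i _ =>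
        continuous_finset_sum _ fun j _ =>
          (continuous_apply j).comp (continuous_apply i)) continuous_const
    have hanti : ∀ n, C (n+1) ⊆ C n := by
      intro n q hq
      refine ⟨hq.1, fun m => le_trans (tsub_le_tsub_left ?_ t) (hq.2 m)⟩
      exact ENNReal.inv_le_inv.mpr (by exact_mod_cast Nat.le_succ (n+1))
    have hnon : ∀ n, (C n).Nonempty := by
      intro n
      have hlt : t - (↑(n+1))⁻¹ < t :=
        ENNReal.sub_lt_self htlt h0 (by simp)
      rw [ht, lt_iSup_iff] at hlt
      obtain ⟨q', hq'⟩ := hlt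
      rw [lt_iSup_iff] at hq'
      obtain ⟨hq'K, hq'gt⟩ := hq'
      exact ⟨q', hq'K, fun m => hq'gt.le.trans (T_le_S_add_tail hq'K m)⟩
    have hcompact : IsCompact (C 0) := (hclosed 0).isCompact
    obtain ⟨q, hq⟩ := IsCompact.nonempty_iInter_of_sequence_nonempty_isCompact_isClosed
      C hanti hnon hcompact hclosed
    simp only [Set.mem_iInter] at hq
    have hqK : q ∈ K p R := (hq 0).1
    refine ⟨q, hqK, fun q' hq' => (hTt q' hq').trans ?_⟩
    refine ENNReal.le_of_forall_pos_le_add fun ε hε hfin => ?_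
    obtain ⟨n, hn⟩ := ENNReal.exists_inv_nat_lt (a := (ε : ℝ≥0∞)) (by exact_mod_cast hε.ne')
    have h1 : t - (↑(n+1))⁻¹ ≤ T q := le_T_of_forall hp hqK (hq n).2
    calc t ≤ (t - (↑(n+1))⁻¹) + (↑(n+1))⁻¹ := le_tsub_add
      _ ≤ T q + ε := add_le_add h1 (le_trans (ENNReal.inv_le_inv.mpr
            (by exact_mod_cast Nat.le_succ n)) hn.le)


lemma T_add_ite (q : ℕ → ℕ → ℝ≥0∞) (a : ℕ) (c : ℝ≥0∞)
    (q' : ℕ → ℕ → ℝ≥0∞) (h : ∀ x, rowSum q' x = rowSum q x + if x = a then c else 0) :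
    T q' = T q + c := by
  unfold T
  calc ∑' x, rowSum q' x = ∑' x, (rowSum q x + if x = a then c else 0) := tsum_congr h
    _ = (∑' x, rowSum q x) + ∑' x, (if x = a then c else 0) := ENNReal.tsum_add
    _ = (∑' x, rowSum q x) + c := by rw [tsum_ite_eq]

lemma tsum_ite_two {a j : ℕ} (h : a ≠ j) (ε : ℝ≥0∞) :
    ∑' x, (if x = a ∨ x = j then ε else 0) = ε + ε := by
  have hpt : ∀ x : ℕ, (if x = a ∨ x = j then ε else 0)
      = (if x = a then ε else 0) + (if x = j then ε else 0) := by
    intro x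
    by_cases hx : x = a
    · subst hx
      rw [if_pos (Or.inl rfl), if_pos rfl, if_neg h, add_zero]
    · by_cases hy : x = j
      · subst hy
        rw [if_pos (Or.inr rfl), if_neg hx, if_pos rfl, zero_add]
      · rw [if_neg (by tauto), if_neg hx, if_neg hy, add_zero]
  rw [tsum_congr hpt, ENNReal.tsum_add, tsum_ite_eq, tsum_ite_eq]

lemma pair_row {u v : ℕ} (huv : u ≠ v) (ε : ℝ≥0∞) (x : ℕ) :
    ∑' y, (if (x = u ∧ y = v) ∨ (x = v ∧ y = u) then ε else 0)
      = if x = u ∨ x = v then ε else 0 := by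
  by_cases hxu : x = u
  · rw [if_pos (Or.inl hxu)]
    have hpt : ∀ y, (if (x = u ∧ y = v) ∨ (x = v ∧ y = u) then ε else 0)
        = if y = v then ε else 0 := fun y => if_congr (by omega) rfl rfl
    rw [tsum_congr hpt, tsum_ite_eq]
  · by_cases hxv : x = v
    · rw [if_pos (Or.inr hxv)]
      have hpt : ∀ y, (if (x = u ∧ y = v) ∨ (x = v ∧ y = u) then ε else 0)
          = if y = u then ε else 0 := fun y => if_congr (by omega) rfl rfl
      rw [tsum_congr hpt, tsum_ite_eq]
    · rw [if_neg (by omega)]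
      have hpt : ∀ y, (if (x = u ∧ y = v) ∨ (x = v ∧ y = u) then ε else 0) = 0 :=
        fun y => if_neg (by omega)
      rw [tsum_congr hpt, tsum_zero]

/-- a row sum after subtracting ε at one entry and adding ε at another -/
lemma row_shift (f : ℕ → ℝ≥0∞) {b c : ℕ} (hbc : b ≠ c) {ε : ℝ≥0∞} (hε : ε ≤ f b) :
    ∑' y, ((f y - (if y = b then ε else 0)) + (if y = c then ε else 0)) = ∑' y, f y := by
  have e1 : ∑' y, ((f y - (if y = b then ε else 0)) + (if y = c then ε else 0))
      = (∑' y, (f y - (if y = b then ε else 0))) + ε := by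
    rw [ENNReal.tsum_add, tsum_ite_eq]
  have e2 : (∑' y, (f y - (if y = b then ε else 0)))
      = (f b - ε) + ∑' y, (if y = b then 0 else f y) := by
    rw [tsplit (fun y => f y - (if y = b then ε else 0)) b]
    simp only [if_pos rfl]
    congr 1
    refine tsum_congr fun y => ?_
    by_cases hy : y = b <;> simp [hy]
  rw [e1, e2, add_right_comm, tsub_add_cancel_of_le hε, ← tsplit f b]

theorem exists_rowcol [∀ i j, Decidable (R i j)] (hp : ∑' i, p i = 1)
    (hsym : ∀ i j, R i j → R j i) (hirr : ∀ i, ¬ R i i)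
    (hhalf : ∀ a, p a ≠ 0 → (∑' j, if R a j then 0 else p j) ≤ 2⁻¹) :
    ∃ q : ℕ → ℕ → ℝ≥0∞, (∀ i j, q i j = q j i) ∧ (∀ i j, ¬ R i j → q i j = 0) ∧
      ∀ i, rowSum q i = p i := by
  obtain ⟨q, hqK, hmax⟩ := exists_max hp
  obtain ⟨hsymq, hsupp, hrowle⟩ := hqK
  refine ⟨q, hsymq, hsupp, fun a => ?_⟩
  by_contra hne
  have hlt : rowSum q a < p a := lt_of_le_of_ne (hrowle a) hne
  have hple : ∀ i, p i ≤ 1 := fun i => hp ▸ ENNReal.le_tsum i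
  have hTfin : T q ≠ ∞ :=
    ((T_le_one hp ⟨hsymq, hsupp, hrowle⟩).trans_lt ENNReal.one_lt_top).ne
  by_cases hcase1 : ∃ j, R a j ∧ rowSum q j < p j
  · -- augment on the single edge (a,j)
    obtain ⟨j, hRaj, hltj⟩ := hcase1
    have haj : a ≠ j := fun h => hirr a (h ▸ hRaj)
    set ε := min (p a - rowSum q a) (p j - rowSum q j) with hε
    have hε0 : 0 < ε := lt_min (tsub_pos_of_lt hlt) (tsub_pos_of_lt hltj)
    set q1 : ℕ → ℕ → ℝ≥0∞ :=
      fun x y => q x y + (if (x = a ∧ y = j) ∨ (x = j ∧ y = a) then ε else 0) with hq1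
    have hrow1 : ∀ x, rowSum q1 x = rowSum q x + if x = a ∨ x = j then ε else 0 := by
      intro x
      have hsplit : rowSum q1 x = rowSum q x
          + ∑' y, (if (x = a ∧ y = j) ∨ (x = j ∧ y = a) then ε else 0) := ENNReal.tsum_add
      rw [hsplit, pair_row haj]
    have hq1K : q1 ∈ K p R := by
      refine ⟨fun x y => ?_, fun x y hxy => ?_, fun x => ?_⟩
      · simp only [hq1]
        rw [hsymq x y]
        congr 1
        exact if_congr (by tauto) rfl rfl
      · simp only [hq1, hsupp x y hxy, zero_add]
        rw [if_neg]
        rintro (⟨rfl, rfl⟩ | ⟨rfl, rfl⟩)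
        · exact hxy hRaj
        · exact hxy (hsym _ _ hRaj)
      · rw [hrow1 x]
        by_cases hxa : x = a
        · rw [if_pos (Or.inl hxa)]
          calc rowSum q x + ε ≤ rowSum q x + (p x - rowSum q x) := by
                refine add_le_add_right (le_trans (min_le_left _ _) ?_) _
                rw [hxa]
            _ = p x := add_tsub_cancel_of_le (hrowle x)
        · by_cases hxj : x = j
          · rw [if_pos (Or.inr hxj)]
            calc rowSum q x + ε ≤ rowSum q x + (p x - rowSum q x) := by
                  refine add_le_add_right (le_trans (min_le_right _ _) ?_) _
                  rw [hxj]
              _ = p x := add_tsub_cancel_of_le (hrowle x)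
          · rw [if_neg (by tauto), add_zero]
            exact hrowle x
    have hT1 : T q1 = T q + (ε + ε) := by
      unfold T
      calc ∑' x, rowSum q1 x
          = ∑' x, (rowSum q x + if x = a ∨ x = j then ε else 0) := tsum_congr hrow1
        _ = (∑' x, rowSum q x) + ∑' x, (if x = a ∨ x = j then ε else 0) := ENNReal.tsum_add
        _ = (∑' x, rowSum q x) + (ε + ε) := by rw [tsum_ite_two haj]
    have := hmax q1 hq1K
    rw [hT1] at this
    exact absurd this (not_le.mpr (ENNReal.lt_add_right hTfin (by simp [hε0.ne'])))
  · push_neg at hcase1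
    have hsat : ∀ j, R a j → rowSum q j = p j :=
      fun j hj => le_antisymm (hrowle j) (hcase1 j hj)
    by_cases hcase2 : ∃ i j, R a j ∧ q i j ≠ 0 ∧ R i a
    · -- augment along a path of length 2
      obtain ⟨i, j, hRaj, hqij, hRia⟩ := hcase2
      have hia : i ≠ a := fun h => hirr a (h ▸ hRia)
      have haj : a ≠ j := fun h => hirr a (h ▸ hRaj)
      have hRij : R i j := by by_contra h; exact hqij (hsupp i j h)
      have hij : i ≠ j := fun h => hirr j (h ▸ hRij)
      set ε := min ((p a - rowSum q a) / 2) (q i j) with hε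
      have hε0 : 0 < ε := by
        refine lt_min ?_ (pos_iff_ne_zero.mpr hqij)
        rw [pos_iff_ne_zero, Ne, ENNReal.div_eq_zero_iff]
        push_neg
        exact ⟨(tsub_pos_of_lt hlt).ne', ENNReal.ofNat_ne_top⟩
      have hεq : ε ≤ q i j := min_le_right _ _
      have hεq' : ε ≤ q j i := (hsymq j i) ▸ hεq
      have h2ε : ε + ε ≤ p a - rowSum q a := by
        calc ε + ε ≤ (p a - rowSum q a) / 2 + (p a - rowSum q a) / 2 :=
              add_le_add (min_le_left _ _) (min_le_left _ _)
          _ = p a - rowSum q a := ENNReal.add_halves _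
      set q2 : ℕ → ℕ → ℝ≥0∞ := fun x y =>
        (q x y - (if (x = i ∧ y = j) ∨ (x = j ∧ y = i) then ε else 0))
        + (if (x = a ∧ y = j) ∨ (x = j ∧ y = a) ∨ (x = i ∧ y = a) ∨ (x = a ∧ y = i)
            then ε else 0) with hq2
      have hrow2 : ∀ x, rowSum q2 x = rowSum q x + if x = a then ε + ε else 0 := by
        intro x
        by_cases hxa : x = a
        · rw [if_pos hxa]
          have hpt : ∀ y, q2 x y = q x y + (if y = j ∨ y = i then ε else 0) := by
            intro y
            simp only [hq2]
            rw [if_neg (show ¬((x = i ∧ y = j) ∨ (x = j ∧ y = i)) by omega), tsub_zero]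
            congr 1
            exact if_congr (by omega) rfl rfl
          calc rowSum q2 x = ∑' y, (q x y + (if y = j ∨ y = i then ε else 0)) :=
                tsum_congr hpt
            _ = rowSum q x + ∑' y, (if y = j ∨ y = i then ε else 0) := ENNReal.tsum_add
            _ = rowSum q x + (ε + ε) := by rw [tsum_ite_two (Ne.symm hij)]
        · rw [if_neg hxa, add_zero]
          by_cases hxi : x = i
          · have hpt : ∀ y, q2 x y = (q x y - (if y = j then ε else 0))
                + (if y = a then ε else 0) := by
              intro y
              simp only [hq2]
              congr 1
              · congr 1
                exact if_congr (by omega) rfl rfl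
              · exact if_congr (by omega) rfl rfl
            have hle : ε ≤ q x j := hxi ▸ hεq
            rw [show rowSum q2 x = ∑' y, ((q x y - (if y = j then ε else 0))
                + (if y = a then ε else 0)) from tsum_congr hpt,
              row_shift (q x) (show j ≠ a by omega) hle]
            rfl
          · by_cases hxj : x = j
            · have hpt : ∀ y, q2 x y = (q x y - (if y = i then ε else 0))
                  + (if y = a then ε else 0) := by
                intro y
                simp only [hq2]
                congr 1
                · congr 1
                  exact if_congr (by omega) rfl rfl
                · exact if_congr (by omega) rfl rfl
              have hle : ε ≤ q x i := hxj ▸ hεq'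
              rw [show rowSum q2 x = ∑' y, ((q x y - (if y = i then ε else 0))
                  + (if y = a then ε else 0)) from tsum_congr hpt,
                row_shift (q x) (show i ≠ a by omega) hle]
              rfl
            · refine tsum_congr fun y => ?_
              simp only [hq2]
              rw [if_neg (show ¬((x = i ∧ y = j) ∨ (x = j ∧ y = i)) by omega),
                if_neg (show ¬((x = a ∧ y = j) ∨ (x = j ∧ y = a) ∨ (x = i ∧ y = a)
                  ∨ (x = a ∧ y = i)) by omega), tsub_zero, add_zero]
      have hq2K : q2 ∈ K p R := by
        refine ⟨fun x y => ?_, fun x y hxy => ?_, fun x => ?_⟩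
        · simp only [hq2]
          rw [hsymq x y]
          congr 1
          · congr 1
            exact if_congr (by tauto) rfl rfl
          · exact if_congr (by tauto) rfl rfl
        · simp only [hq2, hsupp x y hxy, zero_tsub, zero_add]
          rw [if_neg]
          rintro (⟨rfl, rfl⟩ | ⟨rfl, rfl⟩ | ⟨rfl, rfl⟩ | ⟨rfl, rfl⟩)
          · exact hxy hRaj
          · exact hxy (hsym _ _ hRaj)
          · exact hxy hRia
          · exact hxy (hsym _ _ hRia)
        · rw [hrow2 x]
          by_cases hxa : x = a
          · rw [if_pos hxa]
            calc rowSum q x + (ε + ε) ≤ rowSum q x + (p x - rowSum q x) := by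
                  refine add_le_add_right (le_trans h2ε ?_) _
                  rw [hxa]
              _ = p x := add_tsub_cancel_of_le (hrowle x)
          · rw [if_neg hxa, add_zero]
            exact hrowle x
      have hT2 : T q2 = T q + (ε + ε) := T_add_ite q a (ε + ε) q2 hrow2
      have := hmax q2 hq2K
      rw [hT2] at this
      exact absurd this (not_le.mpr (ENNReal.lt_add_right hTfin (by simp [hε0.ne'])))
    · -- no augmentation possible: contradiction with mass counting
      push_neg at hcase2
      have hpa0 : p a ≠ 0 := fun h => by simp [h] at hlt
      set M := ∑' n, if R a n then p n else 0 with hM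
      set C := ∑' n, if R a n then 0 else p n with hCdef
      have hC : C ≤ 2⁻¹ := hhalf a hpa0
      have hMC : M + C = 1 := by
        rw [hM, hCdef, ← ENNReal.tsum_add, ← hp]
        exact tsum_congr fun n => by split_ifs <;> simp
      have hCfin : C ≠ ∞ :=
        (hC.trans_lt (ENNReal.inv_lt_top.mpr (by norm_num))).ne
      have hMfin : M ≠ ∞ := by
        intro h
        rw [h, top_add] at hMC
        exact ENNReal.top_ne_one hMC
      have hCM : C ≤ M := by
        have h1 : C + C ≤ M + C := by
          rw [hMC]
          calc C + C ≤ 2⁻¹ + 2⁻¹ := add_le_add hC hC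
            _ = 1 := ENNReal.inv_two_add_inv_two
        exact (ENNReal.add_le_add_iff_right hCfin).mp h1
      have hMle : M ≤ rowSum q a + ∑' m, (if m = a then 0 else if R m a then 0 else p m) := by
        have s1 : M = ∑' n, ∑' m, (if R a n then q m n else 0) := by
          rw [hM]
          refine tsum_congr fun n => ?_
          split_ifs with h
          · rw [← hsat n h, ← colSum_eq q hsymq n]
          · simp
        have s2 : M ≤ ∑' m, (if m = a then rowSum q a else if R m a then 0 else p m) := by
          rw [s1, ENNReal.tsum_comm]
          refine ENNReal.tsum_le_tsum fun m => ?_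
          by_cases hma : m = a
          · rw [if_pos hma, hma]
            exact ENNReal.tsum_le_tsum fun n => by
              split_ifs
              · exact le_rfl
              · exact zero_le
          · rw [if_neg hma]
            by_cases hRa : R m a
            · rw [if_pos hRa]
              have hz : ∀ n, (if R a n then q m n else 0) = 0 := fun n => by
                split_ifs with h
                · by_contra hq0
                  exact (hcase2 m n h hq0) hRa
                · rfl
              rw [tsum_congr hz, tsum_zero]
            · rw [if_neg hRa]
              refine le_trans (ENNReal.tsum_le_tsum fun n => ?_) (hrowle m)
              split_ifs
              · exact le_rfl
              · exact zero_le
        refine s2.trans (le_of_eq ?_)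
        rw [tsplit (fun m => if m = a then rowSum q a else if R m a then 0 else p m) a]
        simp only [if_pos rfl]
        congr 1
        refine tsum_congr fun m => ?_
        by_cases hma : m = a
        · rw [if_pos hma, if_pos hma]
        · rw [if_neg hma, if_neg hma, if_neg hma]
      have hCeq : C = p a + ∑' m, (if m = a then 0 else if R m a then 0 else p m) := by
        rw [hCdef, tsplit (fun n => if R a n then 0 else p n) a, if_neg (hirr a)]
        congr 1
        refine tsum_congr fun m => ?_
        by_cases hma : m = a
        · rw [if_pos hma, if_pos hma]
        · rw [if_neg hma, if_neg hma]
          exact if_congr ⟨hsym a m, hsym m a⟩ rfl rfl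
      have hfinal : M + p a ≤ M + rowSum q a := by
        calc M + p a
            ≤ (rowSum q a + ∑' m, (if m = a then 0 else if R m a then 0 else p m)) + p a :=
              add_le_add_left hMle _
          _ = rowSum q a + (p a + ∑' m, (if m = a then 0 else if R m a then 0 else p m)) := by
              ring
          _ = rowSum q a + C := by rw [← hCeq]
          _ ≤ rowSum q a + M := add_le_add_right hCM _
          _ = M + rowSum q a := add_comm _ _
      exact absurd ((ENNReal.add_le_add_iff_left hMfin).mp hfinal) (not_le.mpr hlt)

open MeasureTheory Metric in
theorem exists_coupling {X : Type*} [MetricSpace X] [MeasurableSpace X] [BorelSpace X]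
    [TopologicalSpace.SeparableSpace X]
    (ρ : Measure X) [IsProbabilityMeasure ρ] {r r' : ℝ} (hr0 : 0 < r')
    (hrr : r' < r) (hκ : ∀ x : X, ρ (closedBall x r) ≤ 2⁻¹) :
    ∃ lam : Measure (X × X), IsProbabilityMeasure lam ∧ lam.map Prod.fst = ρ ∧
      lam.map Prod.snd = ρ ∧ lam {z : X × X | dist z.1 z.2 < r'} = 0 := by
  classical
  have hXne : Nonempty X := by
    by_contra h
    rw [not_nonempty_iff] at h
    have h1 : (Set.univ : Set X) = ∅ := Set.univ_eq_empty_iff.mpr h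
    have := measure_univ (μ := ρ)
    rw [h1, measure_empty] at this
    exact zero_ne_one this
  set ε := (r - r') / 3 with hεdef
  have hε0 : 0 < ε := by simp only [hεdef]; linarith
  obtain ⟨As, hmeas, hbdd, hdiam, hcover, hdisj⟩ :=
    SeparableSpace.exists_measurable_partition_diam_le X hε0
  set t : ℕ → X := fun n => if h : (As n).Nonempty then h.choose else Classical.arbitrary X
    with htdef
  have ht : ∀ n, (As n).Nonempty → t n ∈ As n := by
    intro n hn
    simp only [htdef, dif_pos hn]
    exact hn.choose_spec
  set p : ℕ → ℝ≥0∞ := fun n => ρ (As n) with hpdef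
  have hp : ∑' n, p n = 1 := by
    rw [hpdef, ← measure_iUnion hdisj hmeas, hcover, measure_univ]
  have hone : ∀ n, (As n = ∅) → p n = 0 := fun n h => by simp [hpdef, h]
  have hnonempty_of_p : ∀ n, p n ≠ 0 → (As n).Nonempty := by
    intro n h
    rw [Set.nonempty_iff_ne_empty]
    intro he
    exact h (hone n he)
  set R : ℕ → ℕ → Prop := fun n m => r' + 2 * ε ≤ dist (t n) (t m) with hRdef
  have hsym : ∀ i j, R i j → R j i := by
    intro i j h
    simp only [hRdef] at h ⊢
    rwa [dist_comm]
  have hirr : ∀ i, ¬ R i i := by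
    intro i h
    simp only [hRdef, dist_self] at h
    nlinarith
  have hhalf : ∀ a, p a ≠ 0 → (∑' j, if R a j then 0 else p j) ≤ 2⁻¹ := by
    intro a ha
    have hta : t a ∈ As a := ht a (hnonempty_of_p a ha)
    set B : ℕ → Set X := fun j => if R a j then ∅ else As j with hBdef
    have hBmeas : ∀ j, MeasurableSet (B j) := by
      intro j
      simp only [hBdef]
      split_ifs
      · exact MeasurableSet.empty
      · exact hmeas j
    have hBdisj : Pairwise (Function.onFun Disjoint B) := by
      intro n m hnm
      have := hdisj hnm
      simp only [Function.onFun, hBdef]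
      split_ifs <;> simp_all [Set.disjoint_empty, Set.empty_disjoint]
    have hsum : (∑' j, if R a j then 0 else p j) = ρ (⋃ j, B j) := by
      rw [measure_iUnion hBdisj hBmeas]
      refine (tsum_congr fun j => ?_).symm
      simp only [hBdef]
      split_ifs <;> simp [hpdef]
    have hsub : (⋃ j, B j) ⊆ closedBall (t a) r := by
      intro y hy
      simp only [Set.mem_iUnion] at hy
      obtain ⟨j, hj⟩ := hy
      simp only [hBdef] at hj
      by_cases hR : R a j
      · simp [hR] at hj
      · rw [if_neg hR] at hj
        have htj : t j ∈ As j := ht j ⟨y, hj⟩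
        have h1 : dist y (t j) ≤ ε := (dist_le_diam_of_mem (hbdd j) hj htj).trans (hdiam j)
        have h2 : dist (t a) (t j) < r' + 2 * ε := by
          simp only [hRdef] at hR
          linarith [not_le.mp hR]
        have : dist y (t a) ≤ dist y (t j) + dist (t j) (t a) := dist_triangle _ _ _
        rw [mem_closedBall]
        have h3 : dist (t j) (t a) = dist (t a) (t j) := dist_comm _ _
        have hre : r' + 3 * ε = r := by simp only [hεdef]; ring
        nlinarith
    exact (le_of_eq hsum).trans ((measure_mono hsub).trans (hκ (t a)))
  obtain ⟨q, hqsym, hqsupp, hqrow⟩ := exists_rowcol (R := R) hp hsym hirr hhalf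
  have hqcol : ∀ j, ∑' i, q i j = p j := fun j => (colSum_eq q hqsym j).trans (hqrow j)
  have hple : ∀ i, p i ≤ 1 := fun i => hp ▸ ENNReal.le_tsum i
  have hpfin : ∀ i, p i ≠ ∞ := fun i => ((hple i).trans_lt ENNReal.one_lt_top).ne
  have hqle : ∀ i j, q i j ≤ p i := fun i j => (hqrow i) ▸ ENNReal.le_tsum j
  obtain ⟨ν, hν_apply⟩ : ∃ ν : ℕ → Measure X,
      ∀ i (s : Set X), MeasurableSet s → ν i s = (p i)⁻¹ * ρ (s ∩ As i) :=
    ⟨fun i => (p i)⁻¹ • ρ.restrict (As i), fun i s hs => by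
      simp only [Measure.smul_apply, smul_eq_mul, Measure.restrict_apply hs]⟩
  have hν_univ : ∀ i, p i ≠ 0 → ν i Set.univ = 1 := by
    intro i h
    rw [hν_apply i _ MeasurableSet.univ, Set.univ_inter]
    exact ENNReal.inv_mul_cancel h (hpfin i)
  have hν_fin : ∀ i, IsFiniteMeasure (ν i) := by
    intro i
    constructor
    by_cases h : p i = 0
    · rw [hν_apply i _ MeasurableSet.univ, Set.univ_inter]
      have : ρ (As i) = 0 := h
      rw [this, mul_zero]
      exact ENNReal.zero_lt_top
    · rw [hν_univ i h]
      exact ENNReal.one_lt_top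
  set lam : Measure (X × X) :=
    Measure.sum (fun ij : ℕ × ℕ => q ij.1 ij.2 • ((ν ij.1).prod (ν ij.2))) with hlamdef
  have hlam_apply : ∀ s : Set (X × X), MeasurableSet s →
      lam s = ∑' ij : ℕ × ℕ, q ij.1 ij.2 * ((ν ij.1).prod (ν ij.2)) s := by
    intro s hs
    rw [hlamdef, Measure.sum_apply _ hs]
    exact tsum_congr fun ij => by rw [Measure.smul_apply, smul_eq_mul]
  have hq0_of_pj : ∀ i j, p j = 0 → q i j = 0 := by
    intro i j h
    have := (hqsym i j ▸ hqle j i : q i j ≤ p j)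
    exact le_antisymm (this.trans h.le) (zero_le)
  have hq0_of_pi : ∀ i j, p i = 0 → q i j = 0 := by
    intro i j h
    exact le_antisymm ((hqle i j).trans h.le) (zero_le)
  -- first marginal
  have hfst : lam.map Prod.fst = ρ := by
    refine Measure.ext fun s hs => ?_
    rw [Measure.map_apply measurable_fst hs]
    have hpre : (Prod.fst ⁻¹' s : Set (X × X)) = s ×ˢ Set.univ := (Set.prod_univ).symm
    rw [hpre, hlam_apply _ ((hs.prod MeasurableSet.univ))]
    have hterm : ∀ ij : ℕ × ℕ, q ij.1 ij.2 * ((ν ij.1).prod (ν ij.2)) (s ×ˢ Set.univ)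
        = q ij.1 ij.2 * ν ij.1 s := by
      rintro ⟨i, j⟩
      haveI := hν_fin i
      haveI := hν_fin j
      show q i j * ((ν i).prod (ν j)) _ = _
      rw [Measure.prod_prod (μ := ν i) (ν := ν j)]
      by_cases h : p j = 0
      · rw [hq0_of_pj i j h]
        simp
      · rw [hν_univ j h, mul_one]
    rw [tsum_congr hterm, ENNReal.tsum_prod']
    have hrowred : ∀ i, (∑' j, q i j * ν i s) = p i * ν i s := by
      intro i
      rw [ENNReal.tsum_mul_right, show (∑' j, q i j) = p i from hqrow i]
    rw [tsum_congr hrowred]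
    have hterm2 : ∀ i, p i * ν i s = ρ (s ∩ As i) := by
      intro i
      by_cases h : p i = 0
      · have h2 : ρ (s ∩ As i) = 0 := by
          refine le_antisymm (le_trans (measure_mono (Set.inter_subset_right)) ?_) (zero_le)
          exact h.le
        rw [h, h2, zero_mul]
      · rw [hν_apply i s hs, ← mul_assoc, ENNReal.mul_inv_cancel h (hpfin i), one_mul]
    rw [tsum_congr hterm2, ← measure_iUnion
      (fun n m hnm => ((hdisj hnm).mono (Set.inter_subset_right) (Set.inter_subset_right)))
      (fun i => hs.inter (hmeas i)),
      ← Set.inter_iUnion, hcover, Set.inter_univ]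
  -- second marginal
  have hsnd : lam.map Prod.snd = ρ := by
    refine Measure.ext fun s hs => ?_
    rw [Measure.map_apply measurable_snd hs]
    have hpre : (Prod.snd ⁻¹' s : Set (X × X)) = Set.univ ×ˢ s := (Set.univ_prod).symm
    rw [hpre, hlam_apply _ ((MeasurableSet.univ.prod hs))]
    have hterm : ∀ ij : ℕ × ℕ, q ij.1 ij.2 * ((ν ij.1).prod (ν ij.2)) (Set.univ ×ˢ s)
        = q ij.1 ij.2 * ν ij.2 s := by
      rintro ⟨i, j⟩
      haveI := hν_fin i
      haveI := hν_fin j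
      show q i j * ((ν i).prod (ν j)) _ = _
      rw [Measure.prod_prod (μ := ν i) (ν := ν j)]
      by_cases h : p i = 0
      · rw [hq0_of_pi i j h]
        simp
      · rw [hν_univ i h, one_mul]
    rw [tsum_congr hterm, ENNReal.tsum_prod', ENNReal.tsum_comm]
    have hrowred : ∀ j, (∑' i, q i j * ν j s) = p j * ν j s := by
      intro j
      rw [ENNReal.tsum_mul_right, hqcol j]
    rw [tsum_congr hrowred]
    have hterm2 : ∀ i, p i * ν i s = ρ (s ∩ As i) := by
      intro i
      by_cases h : p i = 0
      · have h2 : ρ (s ∩ As i) = 0 := by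
          refine le_antisymm (le_trans (measure_mono (Set.inter_subset_right)) ?_) (zero_le)
          exact h.le
        rw [h, h2, zero_mul]
      · rw [hν_apply i s hs, ← mul_assoc, ENNReal.mul_inv_cancel h (hpfin i), one_mul]
    rw [tsum_congr hterm2, ← measure_iUnion
      (fun n m hnm => ((hdisj hnm).mono (Set.inter_subset_right) (Set.inter_subset_right)))
      (fun i => hs.inter (hmeas i)),
      ← Set.inter_iUnion, hcover, Set.inter_univ]
  have hprob : IsProbabilityMeasure lam := by
    constructor
    rw [← Set.preimage_univ (f := Prod.fst),
      ← Measure.map_apply measurable_fst MeasurableSet.univ, hfst, measure_univ]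
  -- the support property
  have hnull : lam {z : X × X | dist z.1 z.2 < r'} = 0 := by
    haveI : SecondCountableTopology X :=
      UniformSpace.secondCountable_of_separable X
    have hDopen : IsOpen {z : X × X | dist z.1 z.2 < r'} :=
      isOpen_lt (by fun_prop) continuous_const
    rw [hlam_apply _ hDopen.measurableSet]
    refine (tsum_congr ?_).trans tsum_zero
    rintro ⟨i, j⟩
    by_cases hq : q i j = 0
    · rw [hq, zero_mul]
    · have hpi : p i ≠ 0 := fun h => hq (hq0_of_pi i j h)
      have hpj : p j ≠ 0 := fun h => hq (hq0_of_pj i j h)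
      have hRij : R i j := by
        by_contra h
        exact hq (hqsupp i j h)
      have hti : t i ∈ As i := ht i (hnonempty_of_p i hpi)
      have htj : t j ∈ As j := ht j (hnonempty_of_p j hpj)
      have hdisjt : {z : X × X | dist z.1 z.2 < r'} ⊆ (As i ×ˢ As j)ᶜ := by
        rintro ⟨x, y⟩ hz
        simp only [Set.mem_setOf_eq] at hz
        intro hmem
        obtain ⟨hx, hy⟩ := hmem
        have h1 : dist x (t i) ≤ ε := (dist_le_diam_of_mem (hbdd i) hx hti).trans (hdiam i)
        have h2 : dist y (t j) ≤ ε := (dist_le_diam_of_mem (hbdd j) hy htj).trans (hdiam j)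
        have h3 : r' + 2 * ε ≤ dist (t i) (t j) := hRij
        have h4 : dist (t i) (t j) ≤ dist (t i) x + dist x y + dist y (t j) :=
          dist_triangle4 _ _ _ _
        rw [dist_comm (t i) x] at h4
        linarith
      haveI := hν_fin i
      haveI := hν_fin j
      have hzero : ((ν i).prod (ν j)) ((As i ×ˢ As j)ᶜ) = 0 := by
        have hsub2 : (As i ×ˢ As j)ᶜ ⊆ ((As i)ᶜ ×ˢ Set.univ) ∪ (Set.univ ×ˢ (As j)ᶜ) := by
          rintro ⟨x, y⟩ hz
          simp only [Set.mem_compl_iff, Set.mem_prod, not_and] at hz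
          by_cases hx : x ∈ As i
          · exact Or.inr ⟨Set.mem_univ _, hz hx⟩
          · exact Or.inl ⟨hx, Set.mem_univ _⟩
        refine measure_mono_null hsub2 ?_
        have hz1 : ν i ((As i)ᶜ) = 0 := by
          rw [hν_apply i _ (hmeas i).compl, Set.compl_inter_self, measure_empty, mul_zero]
        have hz2 : ν j ((As j)ᶜ) = 0 := by
          rw [hν_apply j _ (hmeas j).compl, Set.compl_inter_self, measure_empty, mul_zero]
        refine le_antisymm (le_trans (measure_union_le _ _) ?_) (zero_le)
        rw [Measure.prod_prod, Measure.prod_prod, hz1, hz2, zero_mul, mul_zero, add_zero]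
      rw [measure_mono_null hdisjt hzero, mul_zero]
  exact ⟨lam, hprob, hfst, hsnd, hnull⟩

end

end Stmt11Aux


open MeasureTheory Metric ENNReal

theorem stmt11 {X : Type*} [MetricSpace X] [PolishSpace X] [MeasurableSpace X] [BorelSpace X]
    (ρ : Measure X) [IsProbabilityMeasure ρ]
    (hatom : (⨆ x : X, ρ {x}) < 2⁻¹)
    (rρ : ℝ)
    (hr : IsLUB {r : ℝ | 0 < r ∧ (⨆ x : X, ρ (closedBall x r)) ≤ 2⁻¹} rρ)
    (hne : {r : ℝ | 0 < r ∧ (⨆ x : X, ρ (closedBall x r)) ≤ 2⁻¹}.Nonempty)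
    (δ : ℝ) (hδ0 : 0 < δ) (hδ : δ < 1 / 2)
    (htail : (⨅ x : X, ρ (ball x (2 * rρ))ᶜ) ≤ ENNReal.ofReal δ) :
    (⨅ (lam : Measure (X × X))
        (_ : IsProbabilityMeasure lam ∧ lam.map Prod.fst = ρ ∧ lam.map Prod.snd = ρ),
        ∫⁻ p, (edist p.1 p.2)⁻¹ ∂lam)
      ≥ ENNReal.ofReal ((1 - 2 * δ) / 4) *
        (⨅ (lam : Measure (X × X))
          (_ : IsProbabilityMeasure lam ∧ lam.map Prod.fst = ρ ∧ lam.map Prod.snd = ρ),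
          essSup (fun p : X × X => (edist p.1 p.2)⁻¹) lam) := by
  classical
  obtain ⟨r0, hr0pos, hr0half⟩ := hne
  have hrρpos : 0 < rρ := lt_of_lt_of_le hr0pos (hr.1 ⟨hr0pos, hr0half⟩)
  -- Step 1: upper bound on the `C∞` infimum.
  have hCinf : (⨅ (lam : Measure (X × X))
      (_ : IsProbabilityMeasure lam ∧ lam.map Prod.fst = ρ ∧ lam.map Prod.snd = ρ),
      essSup (fun z : X × X => (edist z.1 z.2)⁻¹) lam) ≤ (ENNReal.ofReal rρ)⁻¹ := by
    have key : ∀ r' : ℝ, 0 < r' → r' < rρ →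
        (⨅ (lam : Measure (X × X))
          (_ : IsProbabilityMeasure lam ∧ lam.map Prod.fst = ρ ∧ lam.map Prod.snd = ρ),
          essSup (fun z : X × X => (edist z.1 z.2)⁻¹) lam) ≤ (ENNReal.ofReal r')⁻¹ := by
      intro r' h0 hlt
      obtain ⟨r, hrS, hr'r⟩ : ∃ r ∈ {r : ℝ | 0 < r ∧ (⨆ x : X, ρ (closedBall x r)) ≤ 2⁻¹},
          r' < r := by
        by_contra h
        push_neg at h
        exact absurd (hr.2 fun r hrS => h r hrS) (not_le.mpr hlt)
      have hκ : ∀ x : X, ρ (closedBall x r) ≤ 2⁻¹ := fun x =>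
        le_trans (le_iSup (fun x => ρ (closedBall x r)) x) hrS.2
      obtain ⟨lam, hprob, hfst, hsnd, hnull⟩ := Stmt11Aux.exists_coupling ρ h0 hr'r hκ
      refine iInf₂_le_of_le lam ⟨hprob, hfst, hsnd⟩ ?_
      refine essSup_le_of_ae_le _ ?_
      rw [Filter.EventuallyLE, ae_iff]
      refine measure_mono_null ?_ hnull
      intro z hz
      simp only [Set.mem_setOf_eq, not_le] at hz
      have h1 : edist z.1 z.2 < ENNReal.ofReal r' := ENNReal.inv_lt_inv.mp hz
      exact edist_lt_ofReal.mp h1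
    refine ENNReal.le_of_forall_pos_le_add fun ε hε hfin => ?_
    set c : ℝ := 1 / rρ + ε with hc
    have hcpos : 0 < c := by
      rw [hc]
      have h1 : (0:ℝ) < 1 / rρ := by positivity
      have hε' : (0:ℝ) ≤ ε := ε.2
      linarith
    set r' : ℝ := 1 / c with hr'
    have hr'pos : 0 < r' := by rw [hr']; positivity
    have hr'lt : r' < rρ := by
      rw [hr', div_lt_iff₀ hcpos]
      have hε' : (0:ℝ) < ε := hε
      have hs : rρ * c = 1 + rρ * ε := by
        rw [hc, mul_add, mul_one_div, div_self hrρpos.ne']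
      nlinarith
    refine (key r' hr'pos hr'lt).trans ?_
    have e1 : (ENNReal.ofReal r')⁻¹ = ENNReal.ofReal c := by
      rw [hr', one_div, ← ENNReal.ofReal_inv_of_pos (by positivity), inv_inv]
    have e2 : (ENNReal.ofReal rρ)⁻¹ = ENNReal.ofReal (1 / rρ) := by
      rw [one_div, ← ENNReal.ofReal_inv_of_pos hrρpos]
    have e3 : ENNReal.ofReal (1 / rρ + (ε : ℝ))
        = ENNReal.ofReal (1 / rρ) + ENNReal.ofReal (ε : ℝ) :=
      ENNReal.ofReal_add (by positivity) ε.2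
    rw [e1, e2, hc, e3, ENNReal.ofReal_coe_nnreal]
  -- Step 2: lower bound on the Coulomb-cost infimum, for every coupling.
  have hconst : ENNReal.ofReal ((1 - 2 * δ) / 4) * (ENNReal.ofReal rρ)⁻¹
      = (ENNReal.ofReal (4 * rρ))⁻¹ * ENNReal.ofReal (1 - 2 * δ) := by
    rw [ENNReal.ofReal_div_of_pos (by norm_num : (0:ℝ) < 4),
      ENNReal.ofReal_mul (by norm_num : (0:ℝ) ≤ 4),
      ENNReal.mul_inv (Or.inl (by simp)) (Or.inl ENNReal.ofReal_ne_top), div_eq_mul_inv]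
    ring
  have hLB : ∀ lam : Measure (X × X), IsProbabilityMeasure lam →
      lam.map Prod.fst = ρ → lam.map Prod.snd = ρ →
      ENNReal.ofReal ((1 - 2 * δ) / 4) * (ENNReal.ofReal rρ)⁻¹
        ≤ ∫⁻ z, (edist z.1 z.2)⁻¹ ∂lam := by
    intro lam hprob hfst hsnd
    have hstep : ∀ x0 : X,
        (ENNReal.ofReal (4 * rρ))⁻¹ * (1 - 2 * ρ (ball x0 (2 * rρ))ᶜ)
          ≤ ∫⁻ z, (edist z.1 z.2)⁻¹ ∂lam := by
      intro x0
      set A : Set X := ball x0 (2 * rρ) with hA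
      have hAmeas : MeasurableSet A := measurableSet_ball
      have hAA : MeasurableSet (A ×ˢ A) := hAmeas.prod hAmeas
      have e1 : lam (Aᶜ ×ˢ (Set.univ : Set X)) = ρ Aᶜ := by
        have h : (Aᶜ ×ˢ (Set.univ : Set X)) = Prod.fst ⁻¹' Aᶜ := Set.prod_univ
        rw [h, ← Measure.map_apply measurable_fst hAmeas.compl, hfst]
      have e2 : lam ((Set.univ : Set X) ×ˢ Aᶜ) = ρ Aᶜ := by
        have h : ((Set.univ : Set X) ×ˢ Aᶜ) = Prod.snd ⁻¹' Aᶜ := Set.univ_prod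
        rw [h, ← Measure.map_apply measurable_snd hAmeas.compl, hsnd]
      have hcompl : lam ((A ×ˢ A)ᶜ) ≤ 2 * ρ Aᶜ := by
        have hsub : (A ×ˢ A)ᶜ ⊆ (Aᶜ ×ˢ (Set.univ : Set X)) ∪ ((Set.univ : Set X) ×ˢ Aᶜ) := by
          rintro ⟨x, y⟩ hz
          simp only [Set.mem_compl_iff, Set.mem_prod, not_and] at hz
          by_cases hx : x ∈ A
          · exact Or.inr ⟨Set.mem_univ _, hz hx⟩
          · exact Or.inl ⟨hx, Set.mem_univ _⟩
        calc lam ((A ×ˢ A)ᶜ)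
            ≤ lam (Aᶜ ×ˢ (Set.univ : Set X)) + lam ((Set.univ : Set X) ×ˢ Aᶜ) :=
              (measure_mono hsub).trans (measure_union_le _ _)
          _ = 2 * ρ Aᶜ := by rw [e1, e2, two_mul]
      have hAAlow : 1 - 2 * ρ Aᶜ ≤ lam (A ×ˢ A) := by
        refine tsub_le_iff_right.mpr ?_
        calc (1:ℝ≥0∞) = lam Set.univ := measure_univ.symm
          _ ≤ lam (A ×ˢ A) + lam ((A ×ˢ A)ᶜ) := by
              rw [← Set.union_compl_self (A ×ˢ A)]
              exact measure_union_le _ _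
          _ ≤ lam (A ×ˢ A) + 2 * ρ Aᶜ := add_le_add_right hcompl _
      have hpoint : ∀ z : X × X, z ∈ A ×ˢ A →
          (ENNReal.ofReal (4 * rρ))⁻¹ ≤ (edist z.1 z.2)⁻¹ := by
        rintro ⟨x, y⟩ ⟨hx, hy⟩
        have hx' : dist x x0 < 2 * rρ := mem_ball.mp hx
        have hy' : dist y x0 < 2 * rρ := mem_ball.mp hy
        have h1 : edist x y < ENNReal.ofReal (4 * rρ) := by
          calc edist x y ≤ edist x x0 + edist x0 y := edist_triangle _ _ _
            _ < ENNReal.ofReal (2 * rρ) + ENNReal.ofReal (2 * rρ) := by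
                refine ENNReal.add_lt_add (edist_lt_ofReal.mpr hx') ?_
                rw [edist_comm]
                exact edist_lt_ofReal.mpr hy'
            _ = ENNReal.ofReal (4 * rρ) := by
                rw [← ENNReal.ofReal_add (by positivity) (by positivity)]
                congr 1
                ring
        exact ENNReal.inv_le_inv.mpr h1.le
      calc (ENNReal.ofReal (4 * rρ))⁻¹ * (1 - 2 * ρ Aᶜ)
          ≤ (ENNReal.ofReal (4 * rρ))⁻¹ * lam (A ×ˢ A) := mul_le_mul_right hAAlow _
        _ = ∫⁻ _ in A ×ˢ A, (ENNReal.ofReal (4 * rρ))⁻¹ ∂lam := (setLIntegral_const _ _).symm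
        _ ≤ ∫⁻ z in A ×ˢ A, (edist z.1 z.2)⁻¹ ∂lam :=
            setLIntegral_mono_ae' hAA (Filter.Eventually.of_forall hpoint)
        _ ≤ ∫⁻ z, (edist z.1 z.2)⁻¹ ∂lam := setLIntegral_le_lintegral _ _
    have hsup : ENNReal.ofReal (1 - 2 * δ)
        ≤ ⨆ x0 : X, (1 - 2 * ρ (ball x0 (2 * rρ))ᶜ) := by
      refine ENNReal.le_of_forall_pos_le_add fun η hη hfin => ?_
      have hη2 : ((η : ℝ≥0∞) / 2) ≠ 0 := by
        simp only [ne_eq, ENNReal.div_eq_zero_iff]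
        push_neg
        exact ⟨by exact_mod_cast hη.ne', ENNReal.ofNat_ne_top⟩
      have hlt : (⨅ x : X, ρ (ball x (2 * rρ))ᶜ) < ENNReal.ofReal δ + (η : ℝ≥0∞) / 2 :=
        htail.trans_lt (ENNReal.lt_add_right ENNReal.ofReal_ne_top hη2)
      rw [iInf_lt_iff] at hlt
      obtain ⟨x0, hx0⟩ := hlt
      have hfac : ENNReal.ofReal (1 - 2 * δ) = 1 - 2 * ENNReal.ofReal δ := by
        rw [ENNReal.ofReal_sub _ (by positivity), ENNReal.ofReal_one,
          ENNReal.ofReal_mul (by norm_num : (0:ℝ) ≤ 2), ENNReal.ofReal_ofNat]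
      have h2ρ : 2 * ρ (ball x0 (2 * rρ))ᶜ ≤ 2 * ENNReal.ofReal δ + η := by
        calc 2 * ρ (ball x0 (2 * rρ))ᶜ
            ≤ 2 * (ENNReal.ofReal δ + (η : ℝ≥0∞) / 2) := mul_le_mul_right hx0.le 2
          _ = 2 * ENNReal.ofReal δ + 2 * ((η : ℝ≥0∞) / 2) := mul_add _ _ _
          _ = 2 * ENNReal.ofReal δ + η := by
              rw [ENNReal.mul_div_cancel two_ne_zero ENNReal.ofNat_ne_top]
      calc ENNReal.ofReal (1 - 2 * δ) = 1 - 2 * ENNReal.ofReal δ := hfac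
        _ ≤ (1 - 2 * ENNReal.ofReal δ - η) + η := le_tsub_add
        _ = (1 - (2 * ENNReal.ofReal δ + η)) + η := by rw [tsub_tsub]
        _ ≤ (1 - 2 * ρ (ball x0 (2 * rρ))ᶜ) + η := add_le_add_left (tsub_le_tsub_left h2ρ 1) η
        _ ≤ (⨆ x0 : X, (1 - 2 * ρ (ball x0 (2 * rρ))ᶜ)) + η :=
            add_le_add_left (le_iSup (fun x0 : X => (1 - 2 * ρ (ball x0 (2 * rρ))ᶜ)) x0) η
    calc ENNReal.ofReal ((1 - 2 * δ) / 4) * (ENNReal.ofReal rρ)⁻¹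
        = (ENNReal.ofReal (4 * rρ))⁻¹ * ENNReal.ofReal (1 - 2 * δ) := hconst
      _ ≤ (ENNReal.ofReal (4 * rρ))⁻¹ * ⨆ x0 : X, (1 - 2 * ρ (ball x0 (2 * rρ))ᶜ) :=
          mul_le_mul_right hsup _
      _ = ⨆ x0 : X, (ENNReal.ofReal (4 * rρ))⁻¹ * (1 - 2 * ρ (ball x0 (2 * rρ))ᶜ) :=
          ENNReal.mul_iSup _ _
      _ ≤ ∫⁻ z, (edist z.1 z.2)⁻¹ ∂lam := iSup_le hstep
  -- Step 3: combine.
  rw [ge_iff_le]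
  calc ENNReal.ofReal ((1 - 2 * δ) / 4) *
      (⨅ (lam : Measure (X × X))
        (_ : IsProbabilityMeasure lam ∧ lam.map Prod.fst = ρ ∧ lam.map Prod.snd = ρ),
        essSup (fun z : X × X => (edist z.1 z.2)⁻¹) lam)
      ≤ ENNReal.ofReal ((1 - 2 * δ) / 4) * (ENNReal.ofReal rρ)⁻¹ := mul_le_mul_right hCinf _
    _ ≤ ⨅ (lam : Measure (X × X))
        (_ : IsProbabilityMeasure lam ∧ lam.map Prod.fst = ρ ∧ lam.map Prod.snd = ρ),
        ∫⁻ z, (edist z.1 z.2)⁻¹ ∂lam :=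
      le_iInf₂ fun lam hlam => hLB lam hlam.1 hlam.2.1 hlam.2.2
end

section
/- Let ρ be a Borel probability measure on ℝ^d and consider the Coulomb cost h(t) = 1/t. Then 𝒞_∞(ρ) := inf over couplings λ of ρ with itself of the λ-essential supremum of 1/|x−y| satisfies 𝒞_∞(ρ) ≥ sup{ 1/(2α) : α > 0 and κ_ρ(α) > 1/2 }, where κ_ρ(α) := sup_{x∈ℝ^d} ρ(B̄(x,α)). -/
open MeasureTheory Metric ENNReal

theorem stmt12 (d : ℕ)
    (ρ : Measure (EuclideanSpace ℝ (Fin d))) [IsProbabilityMeasure ρ] :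
    (⨅ (lam : Measure (EuclideanSpace ℝ (Fin d) × EuclideanSpace ℝ (Fin d)))
        (_ : IsProbabilityMeasure lam ∧ lam.map Prod.fst = ρ ∧ lam.map Prod.snd = ρ),
        essSup (fun p => (edist p.1 p.2)⁻¹) lam)
      ≥ ⨆ (α : ℝ) (_ : 0 < α ∧
          (2 : ℝ≥0∞)⁻¹ < ⨆ x : EuclideanSpace ℝ (Fin d), ρ (closedBall x α)),
          ENNReal.ofReal (1 / (2 * α)) := by
  refine le_iInf fun lam => le_iInf fun hlam => iSup_le fun α => iSup_le fun hα => ?_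
  obtain ⟨hlamP, hfst, hsnd⟩ := hlam
  obtain ⟨hα0, hκ⟩ := hα
  rw [lt_iSup_iff] at hκ
  obtain ⟨x, hx⟩ := hκ
  set B := closedBall x α with hB
  have hBm : MeasurableSet B := measurableSet_closedBall
  -- measures of the preimages
  have h1 : lam (Prod.fst ⁻¹' B) = ρ B := by
    rw [← hfst, Measure.map_apply measurable_fst hBm]
  have h2 : lam (Prod.snd ⁻¹' B) = ρ B := by
    rw [← hsnd, Measure.map_apply measurable_snd hBm]
  -- the intersection has positive measure
  have hpos : 0 < lam (Prod.fst ⁻¹' B ∩ Prod.snd ⁻¹' B) := by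
    by_contra h
    push_neg at h
    have h0 : lam (Prod.fst ⁻¹' B ∩ Prod.snd ⁻¹' B) = 0 := le_antisymm h zero_le
    have hsum : lam (Prod.fst ⁻¹' B) + lam (Prod.snd ⁻¹' B)
        = lam (Prod.fst ⁻¹' B ∪ Prod.snd ⁻¹' B)
          + lam (Prod.fst ⁻¹' B ∩ Prod.snd ⁻¹' B) :=
      (measure_union_add_inter _ (measurable_snd hBm)).symm
    rw [h0, add_zero, h1, h2] at hsum
    have hle : ρ B + ρ B ≤ 1 := by
      rw [hsum]; exact prob_le_one
    have : (2 : ℝ≥0∞)⁻¹ + (2 : ℝ≥0∞)⁻¹ < ρ B + ρ B :=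
      ENNReal.add_lt_add hx hx
    rw [ENNReal.inv_two_add_inv_two] at this
    exact absurd (lt_of_lt_of_le this hle) (lt_irrefl 1)
  -- on the intersection, the function is large
  by_contra hcon
  push_neg at hcon
  have hae := ae_lt_of_essSup_lt hcon
  have hsub : Prod.fst ⁻¹' B ∩ Prod.snd ⁻¹' B
      ⊆ {p : EuclideanSpace ℝ (Fin d) × EuclideanSpace ℝ (Fin d) |
          ¬ (edist p.1 p.2)⁻¹ < ENNReal.ofReal (1 / (2 * α))} := by
    rintro ⟨p, q⟩ ⟨hp, hq⟩
    simp only [Set.mem_preimage, hB, mem_closedBall] at hp hq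
    have hd : dist p q ≤ 2 * α := by
      calc dist p q ≤ dist p x + dist x q := dist_triangle _ _ _
        _ ≤ α + α := add_le_add hp (by rwa [dist_comm])
        _ = 2 * α := by ring
    have hedist : edist p q ≤ ENNReal.ofReal (2 * α) := by
      rw [edist_dist]
      exact ENNReal.ofReal_le_ofReal hd
    have hge : ENNReal.ofReal (1 / (2 * α)) ≤ (edist p q)⁻¹ := by
      rw [one_div, ENNReal.ofReal_inv_of_pos (by positivity)]
      exact ENNReal.inv_le_inv' hedist
    exact fun hlt => absurd (lt_of_le_of_lt hge hlt) (lt_irrefl _)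
  have : lam (Prod.fst ⁻¹' B ∩ Prod.snd ⁻¹' B) = 0 :=
    measure_mono_null hsub hae
  exact absurd this (ne_of_gt hpos)
end

section
/- For 0 < ε < 1/2, let ρ_ε be the probability measure on ℝ given by ρ_ε = (1/2) δ_0 + ε δ_1 + (1/2 − ε) δ_{1/ε}, and consider the Coulomb cost h(t) = 1/|x−y|. Then 𝒞(ρ_ε) = 2ε(3/2 − ε) and 𝒞_∞(ρ_ε) = 1, where 𝒞(ρ_ε) := inf over couplings λ of ρ_ε with itself of ∫ 1/|x−y| dλ and 𝒞_∞(ρ_ε) := inf over couplings λ of the λ-essential supremum of 1/|x−y|. In particular 𝒞(ρ_ε) → 0 as ε → 0 while 𝒞_∞(ρ_ε) = 1 for all such ε. -/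
open MeasureTheory Metric ENNReal

theorem stmt18 (ε : ℝ) (hε0 : 0 < ε) (hε : ε < 1 / 2)
    (ρ : Measure ℝ)
    (hρ : ρ = (2 : ℝ≥0∞)⁻¹ • Measure.dirac (0 : ℝ)
        + ENNReal.ofReal ε • Measure.dirac (1 : ℝ)
        + ENNReal.ofReal (1 / 2 - ε) • Measure.dirac (1 / ε)) :
    (⨅ (lam : Measure (ℝ × ℝ))
        (_ : IsProbabilityMeasure lam ∧ lam.map Prod.fst = ρ ∧ lam.map Prod.snd = ρ),
        ∫⁻ p, (edist p.1 p.2)⁻¹ ∂lam)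
      = ENNReal.ofReal (2 * ε * (3 / 2 - ε)) ∧
    (⨅ (lam : Measure (ℝ × ℝ))
        (_ : IsProbabilityMeasure lam ∧ lam.map Prod.fst = ρ ∧ lam.map Prod.snd = ρ),
        essSup (fun p : ℝ × ℝ => (edist p.1 p.2)⁻¹) lam)
      = 1 := by
  -- basic numeric facts
  have hc2 : 2 < 1/ε := by rw [lt_div_iff₀ hε0]; linarith
  have h0c : (0:ℝ) ≠ 1/ε := by intro h; rw [← h] at hc2; norm_num at hc2
  have hne0 : (0:ℝ) ≠ ε := hε0.ne
  have hne1 : ε ≠ 1 := by linarith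
  have h1c : (1:ℝ) ≠ 1/ε := by intro h; rw [← h] at hc2; norm_num at hc2
  have h0c' : (0:ℝ) ≠ ε⁻¹ := by rw [← one_div]; exact h0c
  have h1c' : (1:ℝ) ≠ ε⁻¹ := by rw [← one_div]; exact h1c
  have e01 : (edist (0:ℝ) 1)⁻¹ = 1 := by rw [edist_dist, Real.dist_eq]; norm_num
  have e0c : (edist (0:ℝ) (1/ε))⁻¹ = ENNReal.ofReal ε := by
    rw [edist_dist, Real.dist_eq, show |0 - 1/ε| = 1/ε by rw [abs_of_nonpos] <;> [ring; linarith],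
      ← ENNReal.ofReal_inv_of_pos (by positivity)]
    norm_num
  set G : Set ℝ := {0, 1, 1/ε} with hG
  have hGm : MeasurableSet G := (Set.toFinite G).measurableSet
  have hρ0 : ρ {0} = 2⁻¹ := by simp [hρ, Measure.dirac_apply, h0c'.symm]
  have hρ1 : ρ {1} = ENNReal.ofReal ε := by simp [hρ, Measure.dirac_apply, h1c'.symm]
  have hρc : ρ {1/ε} = ENNReal.ofReal (1/2 - ε) := by
    simp [hρ, Measure.dirac_apply, h0c, h1c, h0c', h1c']
  have hρGc : ρ Gᶜ = 0 := by
    simp only [hρ, Measure.add_apply, Measure.smul_apply, Measure.dirac_apply, Set.indicator_apply,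
      Set.mem_compl_iff, hG, Set.mem_insert_iff, Set.mem_singleton_iff, smul_eq_mul]
    norm_num
  have halfsum : ENNReal.ofReal ε + ENNReal.ofReal (1/2 - ε) = 2⁻¹ := by
    rw [← ENNReal.ofReal_add (by positivity) (by linarith),
      show ε + (1/2 - ε) = 2⁻¹ by ring, ENNReal.ofReal_inv_of_pos (by norm_num)]
    norm_num
  -- the optimal coupling
  set lam0 : Measure (ℝ × ℝ) :=
    ENNReal.ofReal ε • Measure.dirac ((0:ℝ), (1:ℝ))
      + ENNReal.ofReal ε • Measure.dirac ((1:ℝ), (0:ℝ))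
      + ENNReal.ofReal (1/2 - ε) • Measure.dirac ((0:ℝ), 1/ε)
      + ENNReal.ofReal (1/2 - ε) • Measure.dirac (1/ε, (0:ℝ)) with hlam0
  have hprob : IsProbabilityMeasure lam0 := by
    constructor
    simp only [hlam0, Measure.add_apply, Measure.smul_apply, Measure.dirac_apply,
      Set.mem_univ, Set.indicator_of_mem, Pi.one_apply, smul_eq_mul, mul_one]
    rw [← ENNReal.ofReal_add (by linarith) (by linarith),
      ← ENNReal.ofReal_add (by linarith) (by linarith),
      ← ENNReal.ofReal_add (by linarith) (by linarith),
      show ε + ε + (1/2 - ε) + (1/2 - ε) = 1 by ring, ENNReal.ofReal_one]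
  have hfst0 : lam0.map Prod.fst = ρ := by
    rw [hlam0, hρ]
    simp only [Measure.map_add _ _ measurable_fst, Measure.map_smul,
      Measure.map_dirac' measurable_fst]
    rw [← halfsum, add_smul]
    abel
  have hsnd0 : lam0.map Prod.snd = ρ := by
    rw [hlam0, hρ]
    simp only [Measure.map_add _ _ measurable_snd, Measure.map_smul,
      Measure.map_dirac' measurable_snd]
    rw [← halfsum, add_smul]
    abel
  have hcoupling : IsProbabilityMeasure lam0 ∧ lam0.map Prod.fst = ρ ∧ lam0.map Prod.snd = ρ :=
    ⟨hprob, hfst0, hsnd0⟩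
  have hcost : ∫⁻ p : ℝ × ℝ, (edist p.1 p.2)⁻¹ ∂lam0 = ENNReal.ofReal (2 * ε * (3 / 2 - ε)) := by
    rw [hlam0]
    simp only [lintegral_add_measure, lintegral_smul_measure, lintegral_dirac]
    simp only [e01, e0c, edist_comm (1:ℝ) 0, edist_comm (1/ε) (0:ℝ), smul_eq_mul]
    rw [← ENNReal.ofReal_mul (by linarith)]
    simp only [mul_one]
    rw [← ENNReal.ofReal_add (by positivity) (by positivity),
      ← ENNReal.ofReal_add (by positivity) (by nlinarith),
      ← ENNReal.ofReal_add (by nlinarith) (by nlinarith)]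
    congr 1; ring
  have hess : essSup (fun p : ℝ × ℝ => (edist p.1 p.2)⁻¹) lam0 ≤ 1 := by
    refine essSup_le_of_ae_le (1:ℝ≥0∞) ?_
    rw [Filter.EventuallyLE, Filter.eventually_iff, mem_ae_iff]
    have hs : {p : ℝ × ℝ | ((fun p : ℝ × ℝ => (edist p.1 p.2)⁻¹) p ≤ (fun _ => (1:ℝ≥0∞)) p)}ᶜ
        = {p : ℝ × ℝ | ¬ (edist p.1 p.2)⁻¹ ≤ 1} := rfl
    rw [hs, hlam0]
    simp only [Measure.add_apply, Measure.smul_apply, Measure.dirac_apply, Set.indicator_apply,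
      Set.mem_setOf_eq, e01, e0c, edist_comm (1:ℝ) 0, edist_comm (1/ε) (0:ℝ)]
    simp [ENNReal.ofReal_le_one.mpr (by linarith : ε ≤ 1)]
  -- facts about arbitrary couplings
  constructor
  · -- the Coulomb cost
    apply le_antisymm
    · exact (iInf₂_le lam0 hcoupling).trans (le_of_eq hcost)
    · refine le_iInf fun lam => le_iInf fun hlam => ?_
      obtain ⟨hp, hl1, hl2⟩ := hlam
      have hfstA : ∀ A : Set ℝ, MeasurableSet A → lam (Prod.fst ⁻¹' A) = ρ A := fun A hA => by
        rw [← hl1, Measure.map_apply measurable_fst hA]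
      have hsndA : ∀ A : Set ℝ, MeasurableSet A → lam (Prod.snd ⁻¹' A) = ρ A := fun A hA => by
        rw [← hl2, Measure.map_apply measurable_snd hA]
      set D : Set (ℝ × ℝ) := {p | p.1 = p.2} with hD
      have hDm : MeasurableSet D := measurableSet_eq_fun measurable_fst measurable_snd
      by_cases hD0 : lam D = 0
      · -- main case: no diagonal mass
        have hdiag : ∀ x : ℝ, lam {(x, x)} = 0 := by
          intro x
          refine le_antisymm (le_trans (measure_mono ?_) hD0.le) zero_le
          rintro ⟨a, b⟩ hq
          simp only [Set.mem_singleton_iff, Prod.mk.injEq] at hq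
          simp [hD, Set.mem_setOf_eq, hq.1, hq.2]
        have hthree : ∀ z1 z2 z3 : ℝ × ℝ, z1 ≠ z2 → z1 ≠ z3 → z2 ≠ z3 →
            lam ({z1} ∪ ({z2} ∪ {z3})) = lam {z1} + lam {z2} + lam {z3} := by
          intro z1 z2 z3 h12 h13 h23
          rw [measure_union (by simp [h12, h13]) ((measurableSet_singleton _).union
            (measurableSet_singleton _)), measure_union (by simp [h23]) (measurableSet_singleton _),
            add_assoc]
        have hrow : ∀ x : ℝ, lam (Prod.fst ⁻¹' {x})
            = lam {(x,0)} + lam {(x,1)} + lam {(x,1/ε)} := by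
          intro x
          have hsub1 : Prod.fst ⁻¹' {x}
              ⊆ ({((x:ℝ),(0:ℝ))} ∪ ({(x,1)} ∪ {(x,1/ε)})) ∪ Prod.snd ⁻¹' Gᶜ := by
            rintro ⟨a, b⟩ h
            simp only [Set.mem_preimage, Set.mem_singleton_iff] at h
            subst h
            by_cases hb : b ∈ G
            · left
              rw [hG, Set.mem_insert_iff, Set.mem_insert_iff, Set.mem_singleton_iff] at hb
              rcases hb with h | h | h <;> subst h <;> simp
            · right; exact hb
          refine le_antisymm ?_ ?_
          · calc lam (Prod.fst ⁻¹' {x})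
                ≤ lam ({((x:ℝ),(0:ℝ))} ∪ ({(x,1)} ∪ {(x,1/ε)})) + lam (Prod.snd ⁻¹' Gᶜ) :=
                  (measure_mono hsub1).trans (measure_union_le _ _)
              _ = lam {(x,0)} + lam {(x,1)} + lam {(x,1/ε)} := by
                  rw [hsndA _ hGm.compl, hρGc, add_zero,
                    hthree _ _ _ (by simp) (by simp [h0c, hne0, hne1]) (by simp [h1c, hne0, hne1])]
          · rw [← hthree _ _ _ (by simp) (by simp [h0c, hne0, hne1]) (by simp [h1c, hne0, hne1])]
            apply measure_mono
            rintro q hq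
            simp only [Set.mem_union, Set.mem_singleton_iff] at hq
            rcases hq with h | h | h <;> simp [h]
        have hcol : ∀ x : ℝ, lam (Prod.snd ⁻¹' {x})
            = lam {(0,x)} + lam {(1,x)} + lam {(1/ε,x)} := by
          intro x
          have hsub1 : Prod.snd ⁻¹' {x}
              ⊆ ({((0:ℝ),(x:ℝ))} ∪ ({(1,x)} ∪ {(1/ε,x)})) ∪ Prod.fst ⁻¹' Gᶜ := by
            rintro ⟨a, b⟩ h
            simp only [Set.mem_preimage, Set.mem_singleton_iff] at h
            subst h
            by_cases ha : a ∈ G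
            · left
              rw [hG, Set.mem_insert_iff, Set.mem_insert_iff, Set.mem_singleton_iff] at ha
              rcases ha with h | h | h <;> subst h <;> simp
            · right; exact ha
          refine le_antisymm ?_ ?_
          · calc lam (Prod.snd ⁻¹' {x})
                ≤ lam ({((0:ℝ),(x:ℝ))} ∪ ({(1,x)} ∪ {(1/ε,x)})) + lam (Prod.fst ⁻¹' Gᶜ) :=
                  (measure_mono hsub1).trans (measure_union_le _ _)
              _ = lam {(0,x)} + lam {(1,x)} + lam {(1/ε,x)} := by
                  rw [hfstA _ hGm.compl, hρGc, add_zero,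
                    hthree _ _ _ (by simp) (by simp [h0c, hne0, hne1]) (by simp [h1c, hne0, hne1])]
          · rw [← hthree _ _ _ (by simp) (by simp [h0c, hne0, hne1]) (by simp [h1c, hne0, hne1])]
            apply measure_mono
            rintro q hq
            simp only [Set.mem_union, Set.mem_singleton_iff] at hq
            rcases hq with h | h | h <;> simp [h]
        have hrow0 : lam {((0:ℝ),(1:ℝ))} + lam {((0:ℝ),1/ε)} = 2⁻¹ := by
          have := hrow 0
          rw [hfstA _ (measurableSet_singleton _), hρ0, hdiag 0, zero_add] at this
          exact this.symm
        have hrow1 : lam {((1:ℝ),(0:ℝ))} + lam {((1:ℝ),1/ε)} = ENNReal.ofReal ε := by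
          have := hrow 1
          rw [hfstA _ (measurableSet_singleton _), hρ1, hdiag 1, add_zero] at this
          exact this.symm
        have hrowc : lam {(1/ε,(0:ℝ))} + lam {(1/ε,(1:ℝ))} = ENNReal.ofReal (1/2 - ε) := by
          have := hrow (1/ε)
          rw [hfstA _ (measurableSet_singleton _), hρc, hdiag (1/ε), add_zero] at this
          exact this.symm
        have hcol0 : lam {((1:ℝ),(0:ℝ))} + lam {(1/ε,(0:ℝ))} = 2⁻¹ := by
          have := hcol 0
          rw [hsndA _ (measurableSet_singleton _), hρ0, hdiag 0, zero_add] at this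
          exact this.symm
        have hcol1 : lam {((0:ℝ),(1:ℝ))} + lam {(1/ε,(1:ℝ))} = ENNReal.ofReal ε := by
          have := hcol 1
          rw [hsndA _ (measurableSet_singleton _), hρ1, hdiag 1, add_zero] at this
          exact this.symm
        have hcolc : lam {((0:ℝ),1/ε)} + lam {((1:ℝ),1/ε)} = ENNReal.ofReal (1/2 - ε) := by
          have := hcol (1/ε)
          rw [hsndA _ (measurableSet_singleton _), hρc, hdiag (1/ε), add_zero] at this
          exact this.symm
        set rab := (lam {((0:ℝ),(1:ℝ))}).toReal with hrab
        set rba := (lam {((1:ℝ),(0:ℝ))}).toReal with hrba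
        set rac := (lam {((0:ℝ),1/ε)}).toReal with hrac
        set rca := (lam {(1/ε,(0:ℝ))}).toReal with hrca
        set rbc := (lam {((1:ℝ),1/ε)}).toReal with hrbc
        set rcb := (lam {(1/ε,(1:ℝ))}).toReal with hrcb
        have toR : ∀ (u v : ℝ≥0∞) (w : ℝ), 0 ≤ w → u + v = ENNReal.ofReal w →
            u.toReal + v.toReal = w := by
          intro u v w hw huv
          have hu : u ≠ ⊤ := by
            intro h; rw [h] at huv; simp [top_add] at huv
          have hv : v ≠ ⊤ := by
            intro h; rw [h] at huv; simp [add_top] at huv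
          rw [← ENNReal.toReal_add hu hv, huv, ENNReal.toReal_ofReal hw]
        have h2inv : (2⁻¹ : ℝ≥0∞) = ENNReal.ofReal (1/2) := by
          rw [show (1:ℝ)/2 = 2⁻¹ by norm_num, ENNReal.ofReal_inv_of_pos (by norm_num)]
          norm_num
        have hR1 : rab + rac = 1/2 := toR _ _ _ (by norm_num) (by rw [← h2inv]; exact hrow0)
        have hR2 : rba + rbc = ε := toR _ _ _ hε0.le hrow1
        have hR3 : rca + rcb = 1/2 - ε := toR _ _ _ (by linarith) hrowc
        have hR4 : rba + rca = 1/2 := toR _ _ _ (by norm_num) (by rw [← h2inv]; exact hcol0)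
        have hR5 : rab + rcb = ε := toR _ _ _ hε0.le hcol1
        have hR6 : rac + rbc = 1/2 - ε := toR _ _ _ (by linarith) hcolc
        have hnn : 0 ≤ rbc := ENNReal.toReal_nonneg
        have hnn' : 0 ≤ rcb := ENNReal.toReal_nonneg
        have hab : rab + rba = 2*ε := by linarith
        have hac : rac + rca = 1 - 2*ε := by linarith
        have hfin : ∀ z : ℝ × ℝ, lam {z} ≠ ⊤ := fun z => measure_ne_top lam _
        have hKint : ∫⁻ p in insert ((0:ℝ),(1:ℝ)) (insert ((1:ℝ),(0:ℝ)) (insert ((0:ℝ),1/ε)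
              {(1/ε,(0:ℝ))})), (edist p.1 p.2)⁻¹ ∂lam
            = lam {((0:ℝ),(1:ℝ))} + (lam {((1:ℝ),(0:ℝ))}
              + (ENNReal.ofReal ε * lam {((0:ℝ),1/ε)} + ENNReal.ofReal ε * lam {(1/ε,(0:ℝ))})) := by
          rw [lintegral_insert (by simp [Prod.ext_iff, h1c, hne0, hne1]),
            lintegral_insert (by simp [Prod.ext_iff, h0c, h0c.symm, hne0, hne1]),
            lintegral_insert (by simp [Prod.ext_iff, h0c, h1c, hne0, hne1]),
            lintegral_singleton]
          rw [show (((0:ℝ),(1:ℝ)).1) = (0:ℝ) from rfl]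
          simp only [e01, e0c, edist_comm (1:ℝ) 0, edist_comm (1/ε) (0:ℝ), one_mul]
        have hKval : lam {((0:ℝ),(1:ℝ))} + (lam {((1:ℝ),(0:ℝ))}
              + (ENNReal.ofReal ε * lam {((0:ℝ),1/ε)} + ENNReal.ofReal ε * lam {(1/ε,(0:ℝ))}))
            = ENNReal.ofReal (2 * ε * (3 / 2 - ε)) := by
          rw [← ENNReal.ofReal_toReal (hfin ((0:ℝ),(1:ℝ))),
            ← ENNReal.ofReal_toReal (hfin ((1:ℝ),(0:ℝ))),
            ← ENNReal.ofReal_toReal (hfin ((0:ℝ),1/ε)), ← ENNReal.ofReal_toReal (hfin (1/ε,(0:ℝ))),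
            ← ENNReal.ofReal_mul hε0.le, ← ENNReal.ofReal_mul hε0.le,
            ← ENNReal.ofReal_add (by positivity) (by positivity),
            ← ENNReal.ofReal_add ENNReal.toReal_nonneg (by positivity),
            ← ENNReal.ofReal_add ENNReal.toReal_nonneg (by positivity)]
          congr 1
          rw [← hrab, ← hrba, ← hrac, ← hrca]
          linear_combination hab + ε * hac
        calc ENNReal.ofReal (2 * ε * (3 / 2 - ε))
            = ∫⁻ p in insert ((0:ℝ),(1:ℝ)) (insert ((1:ℝ),(0:ℝ)) (insert ((0:ℝ),1/ε)
                {(1/ε,(0:ℝ))})), (edist p.1 p.2)⁻¹ ∂lam := by rw [hKint, hKval]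
          _ ≤ ∫⁻ p, (edist p.1 p.2)⁻¹ ∂lam := lintegral_mono' Measure.restrict_le_self le_rfl
      · -- diagonal has positive mass : integral is infinite
        calc ENNReal.ofReal (2 * ε * (3 / 2 - ε)) ≤ ⊤ := le_top
          _ = ⊤ * lam D := (ENNReal.top_mul hD0).symm
          _ = ∫⁻ _ in D, ⊤ ∂lam := (setLIntegral_const D ⊤).symm
          _ = ∫⁻ p in D, (edist p.1 p.2)⁻¹ ∂lam := by
              refine setLIntegral_congr_fun hDm (fun p hp => ?_)
              rw [hD, Set.mem_setOf_eq] at hp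
              simp [hp]
          _ ≤ ∫⁻ p, (edist p.1 p.2)⁻¹ ∂lam := lintegral_mono' Measure.restrict_le_self le_rfl
  · -- the L∞ cost
    apply le_antisymm
    · exact (iInf₂_le lam0 hcoupling).trans hess
    · refine le_iInf fun lam => le_iInf fun hlam => ?_
      obtain ⟨hp, hl1, hl2⟩ := hlam
      have hfstA : ∀ A : Set ℝ, MeasurableSet A → lam (Prod.fst ⁻¹' A) = ρ A := fun A hA => by
        rw [← hl1, Measure.map_apply measurable_fst hA]
      have hsndA : ∀ A : Set ℝ, MeasurableSet A → lam (Prod.snd ⁻¹' A) = ρ A := fun A hA => by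
        rw [← hl2, Measure.map_apply measurable_snd hA]
      by_contra hcon
      push_neg at hcon
      have hae := ae_lt_of_essSup_lt hcon
      rw [Filter.eventually_iff, mem_ae_iff] at hae
      set S : Set (ℝ × ℝ) := {p | (edist p.1 p.2)⁻¹ < 1} with hS
      have hSeq : {p : ℝ × ℝ | (fun p : ℝ × ℝ => (edist p.1 p.2)⁻¹) p < 1}ᶜ = Sᶜ := rfl
      rw [hSeq] at hae
      have hsub : S ⊆ (Prod.fst ⁻¹' {1/ε}) ∪ (Prod.snd ⁻¹' {1/ε})
          ∪ (Prod.fst ⁻¹' Gᶜ) ∪ (Prod.snd ⁻¹' Gᶜ) := by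
        intro p hp
        by_contra hmem
        simp only [Set.mem_union, not_or, Set.mem_preimage, Set.mem_singleton_iff,
          Set.mem_compl_iff, not_not] at hmem
        obtain ⟨⟨⟨h1, h2⟩, h3⟩, h4⟩ := hmem
        have hedist : 1 < edist p.1 p.2 := by
          have := hp
          rw [hS, Set.mem_setOf_eq, ENNReal.inv_lt_one] at this
          exact this
        have hed : edist p.1 p.2 = ENNReal.ofReal |p.1 - p.2| := by rw [edist_dist, Real.dist_eq]
        have hle : |p.1 - p.2| ≤ 1 := by
          rw [hG, Set.mem_insert_iff, Set.mem_insert_iff, Set.mem_singleton_iff] at h3 h4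
          rcases h3 with h | h | h <;> rcases h4 with h' | h' | h' <;>
            first
              | (exfalso; exact h1 h)
              | (exfalso; exact h2 h')
              | (rw [h, h']; norm_num)
        rw [hed] at hedist
        exact absurd (hedist.trans_le (ENNReal.ofReal_le_one.mpr hle)) (lt_irrefl _)
      have h1S : (1:ℝ≥0∞) ≤ lam S := by
        have := measure_union_le (μ := lam) Sᶜ S
        rw [Set.compl_union_self, hae, zero_add, measure_univ] at this
        exact this
      have hbig : lam S ≤ ENNReal.ofReal (1 - 2*ε) := by
        calc lam S ≤ lam ((Prod.fst ⁻¹' {1/ε}) ∪ (Prod.snd ⁻¹' {1/ε})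
              ∪ (Prod.fst ⁻¹' Gᶜ) ∪ (Prod.snd ⁻¹' Gᶜ)) := measure_mono hsub
          _ ≤ lam (Prod.fst ⁻¹' {1/ε}) + lam (Prod.snd ⁻¹' {1/ε})
              + lam (Prod.fst ⁻¹' Gᶜ) + lam (Prod.snd ⁻¹' Gᶜ) := by
              refine (measure_union_le _ _).trans (add_le_add ((measure_union_le _ _).trans
                (add_le_add (measure_union_le _ _) le_rfl)) le_rfl)
          _ = ENNReal.ofReal (1/2 - ε) + ENNReal.ofReal (1/2 - ε) + 0 + 0 := by
              rw [hfstA _ (measurableSet_singleton _), hsndA _ (measurableSet_singleton _),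
                hfstA _ hGm.compl, hsndA _ hGm.compl, hρc, hρGc]
          _ = ENNReal.ofReal (1 - 2*ε) := by
              rw [add_zero, add_zero, ← ENNReal.ofReal_add (by linarith) (by linarith)]
              congr 1; ring
      have hfinal : (1:ℝ≥0∞) ≤ ENNReal.ofReal (1 - 2*ε) := h1S.trans hbig
      have hlt : ENNReal.ofReal (1 - 2*ε) < 1 := ENNReal.ofReal_lt_one.mpr (by linarith)
      exact absurd hfinal hlt.not_ge
end
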